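/- arXiv:1801.06947 — 3 statements merged into one kernel-verified Lean document; each statement's English description precedes it below -/
import Mathlib

section
/- A monomial y of ℂ[y_S] belongs to the set {b̃_{(g,λ)} : (g,λ) ∈ OP_{n,k}} if and only if y is divisible by none of the following monomials: (1) y_S·y_T for nonempty S, T ⊆ [n] with S ⊄ T and T ⊄ S; (2) y_{[m]}^r for m ≥ n−k+1; (3) y_S^{r+1} for |S| ≥ n−k+1; (4) y_S^r·y_T for S ⊊ T, |S| ≥ n−k+1 and min(T∖S) > max(S); (5) y_S·y_T^r for S ⊊ T, |T| ≥ n−k+1 and T = S ∪ [ℓ] for some ℓ; (6) y_{S_1}·y_{S_2}^r·y_{S_3} for S_1 ⊊ S_2 ⊊ S_3, |S_2| ≥ n−k+1 and max(S_2∖S_1) < min(S_3∖S_2); (7) y_{S_1}⋯y_{S_{kr}} for multichains ∅ ≠ S_1 ⊆ ⋯ ⊆ S_{kr} of nonempty subsets of [n]. -/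
open scoped Classical
open MvPolynomial Finset

noncomputable section

/-- Nonempty subsets of `[n]`, the index set of the variables `y_S`. -/
abbrev NES (n : ℕ) := {S : Finset (Fin n) // S.Nonempty}

/-- The polynomial ring `ℂ[y_S]`. -/
abbrev YRing (n : ℕ) := MvPolynomial (NES n) ℂ

/-- The polynomial ring `ℂ[x_1, …, x_n]`. -/
abbrev XRing (n : ℕ) := MvPolynomial (Fin n) ℂ

/-- The variable `y_F`, with junk value `1` when `F = ∅`. -/
def Yv {n : ℕ} (F : Finset (Fin n)) : YRing n :=
  if h : F.Nonempty then X ⟨F, h⟩ else 1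

/-- `θ_i = Σ_{|S| = i} y_S^r`. -/
def theta (n r i : ℕ) : YRing n :=
  ∑ S ∈ univ.filter (fun S : NES n => S.1.card = i), X S ^ r

/-- Stanley–Reisner generators `y_S y_T` for incomparable `S, T`. -/
def srSet (n : ℕ) : Set (YRing n) :=
  {p | ∃ S T : NES n, ¬ S.1 ⊆ T.1 ∧ ¬ T.1 ⊆ S.1 ∧ p = X S * X T}

/-- The generators `θ_{n-k+1}, …, θ_n`. -/
def thetaSet (n k r : ℕ) : Set (YRing n) :=
  {p | ∃ i : ℕ, n - k + 1 ≤ i ∧ i ≤ n ∧ p = theta n r i}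

/-- Products `y_{S_1} ⋯ y_{S_m}` over multichains `S_1 ⊆ ⋯ ⊆ S_m` of length `m`. -/
def chainSet (n m : ℕ) : Set (YRing n) :=
  {p | ∃ S : Fin m → NES n, (∀ i j : Fin m, i ≤ j → (S i).1 ⊆ (S j).1) ∧ p = ∏ i, X (S i)}

def SRideal (n : ℕ) : Ideal (YRing n) := Ideal.span (srSet n)

def STideal (n k r : ℕ) : Ideal (YRing n) := Ideal.span (srSet n ∪ thetaSet n k r)

/-- The ideal `𝓙_{n,k}`. -/
def Jideal (n k r : ℕ) : Ideal (YRing n) :=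
  Ideal.span (srSet n ∪ thetaSet n k r ∪ chainSet n (k * r))

/-- The ideal `𝓘_{n,k}`. -/
def Iideal (n k r : ℕ) : Ideal (YRing n) :=
  Ideal.span (srSet n ∪ thetaSet n k r ∪ chainSet n (k * r + 1))

/-- An `r`-colored word of length `m` on distinct letters from `[n]`. -/
structure CWord (n r m : ℕ) where
  letter : Fin m → Fin n
  inj : Function.Injective letter
  color : Fin m → Fin r

/-- `r`-colored permutations of `[n]`, i.e. the group `G(r,1,n)` as a set. -/
abbrev CPerm (n r : ℕ) := CWord n r n

/-- The order on colored letters: `(a,c) < (b,d)` iff `c > d`, or `c = d` and `a < b`. -/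
def colLt {n r : ℕ} (a b : Fin n × Fin r) : Prop :=
  b.2 < a.2 ∨ (a.2 = b.2 ∧ a.1 < b.1)

/-- The descent set of a colored word (0-indexed positions). -/
def DesSet {n r m : ℕ} (w : CWord n r m) : Finset (Fin m) :=
  univ.filter fun i => ∃ j : Fin m, (j : ℕ) = (i : ℕ) + 1 ∧
    colLt (w.letter j, w.color j) (w.letter i, w.color i)

def desNum {n r m : ℕ} (w : CWord n r m) : ℕ := (DesSet w).card

/-- `maj(w) = Σ colors + r · Σ_{i ∈ Des(w)} i` (1-based positions). -/
def majW {n r m : ℕ} (w : CWord n r m) : ℕ :=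
  (∑ i, (w.color i : ℕ)) + r * ∑ i ∈ DesSet w, ((i : ℕ) + 1)

/-- The set of the first `t` letters of `w`. -/
def pref {n r m : ℕ} (w : CWord n r m) (t : ℕ) : Finset (Fin n) :=
  univ.filter fun a => ∃ l : Fin m, (l : ℕ) < t ∧ w.letter l = a

/-- The exponent `m_i = c_i - c_{i+1} + r·[i ∈ Des(g)]` (and `m_last = c_last`). -/
def mExp {n r m : ℕ} (w : CWord n r m) (i : Fin m) : ℕ :=
  (((w.color i : ℤ) - (if h : (i : ℕ) + 1 < m then (w.color ⟨(i : ℕ) + 1, h⟩ : ℤ) else 0))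
    + (if i ∈ DesSet w then (r : ℤ) else 0)).toNat

/-- The descent monomial `b̃_w`. -/
def btw {n r m : ℕ} (w : CWord n r m) : YRing n :=
  ∏ i : Fin m, Yv (pref w ((i : ℕ) + 1)) ^ mExp w i

/-- `b̃_{(g,d)} = b̃_g · Π_i y_{T_i}^{r d_i}`. -/
def btd {n r : ℕ} (g : CPerm n r) (d : Fin n → ℕ) : YRing n :=
  btw g * ∏ i : Fin n, Yv (pref g ((i : ℕ) + 1)) ^ (r * d i)

/-- `b̃_{(w,λ)} = b̃_w · Π_j y_{S_{λ_j}}^r` for a list `λ` of parts. -/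
def btl {n r m : ℕ} (w : CWord n r m) (lam : List ℕ) : YRing n :=
  btw w * (lam.map fun p => Yv (pref w p) ^ r).prod

/-- `r`-colored ordered set partitions of `[n]` with `k` blocks, encoded as pairs `(g, λ)`. -/
structure OPIdx (n k r : ℕ) where
  g : CPerm n r
  lam : List ℕ
  sorted : lam.Pairwise (· ≥ ·)
  pos : ∀ p ∈ lam, 1 ≤ p
  parts_le : ∀ p ∈ lam, p ≤ n - k
  len : lam.length + desNum g + 1 ≤ k

def btOP {n k r : ℕ} (o : OPIdx n k r) : YRing n := btl o.g o.lam

/-- `k`-dimensional `G_n`-faces, encoded as triples `(Z, w, λ)`. -/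
structure FIdx (n k r : ℕ) where
  Z : Finset (Fin n)
  cardZ : Z.card ≤ n - k
  w : CWord n r (n - Z.card)
  mem : ∀ j, w.letter j ∉ Z
  lam : List ℕ
  sorted : lam.Pairwise (· ≥ ·)
  pos : ∀ p ∈ lam, 1 ≤ p
  parts_le : ∀ p ∈ lam, p ≤ n - Z.card - k
  len : lam.length + desNum w + 1 ≤ k

/-- The monomial `b̃_{(Z,g,λ)}`. -/
def btF {n k r : ℕ} (f : FIdx n k r) : YRing n :=
  Yv f.Z ^ (k * r - (btl f.w f.lam).totalDegree) *
    ((∏ i : Fin (n - f.Z.card), Yv (pref f.w ((i : ℕ) + 1) ∪ f.Z) ^ mExp f.w i) *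
      (f.lam.map fun p => Yv (pref f.w p ∪ f.Z) ^ r).prod)

/-- The transfer map `φ : ℂ[y_S] → ℂ[x_n]`, `y_S ↦ Π_{i ∈ S} x_i`. -/
def phi (n : ℕ) : YRing n →ₐ[ℂ] XRing n := aeval fun S : NES n => ∏ i ∈ S.1, X i

/-- An element of `G(r,1,n)`: a permutation together with `r`-th roots of unity. -/
structure GElem (n r : ℕ) where
  perm : Equiv.Perm (Fin n)
  scalar : Fin n → ℂ
  root : ∀ i, scalar i ^ r = 1

/-- The action of `G(r,1,n)` on `ℂ[x_n]` by linear substitution. -/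
def actX {n r : ℕ} (g : GElem n r) : XRing n →ₐ[ℂ] XRing n :=
  aeval fun i => g.scalar i • X (g.perm i)

/-- The action of `G(r,1,n)` on `ℂ[y_S]`, `g · y_S = α · y_{g(S)}`. -/
def actY {n r : ℕ} (g : GElem n r) : YRing n →ₐ[ℂ] YRing n :=
  aeval fun S : NES n =>
    (∏ i ∈ S.1, g.scalar i) • X (⟨S.1.image g.perm, S.2.image _⟩ : NES n)

/-- An exponent vector is a multichain if its support is a chain of subsets. -/
def IsChainE {n : ℕ} (e : NES n →₀ ℕ) : Prop :=
  ∀ S ∈ e.support, ∀ T ∈ e.support, S.1 ⊆ T.1 ∨ T.1 ⊆ S.1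

/-- `μ(y)`: the multiset of sizes (with multiplicity) of a monomial with exponents `e`. -/
def muE {n : ℕ} (e : NES n →₀ ℕ) : Multiset ℕ :=
  e.sum fun S m => Multiset.replicate m S.1.card

/-- Sum of the `j` largest entries of a multiset of naturals. -/
def psum (a : Multiset ℕ) (j : ℕ) : ℕ := (((a.sort (· ≤ ·)).reverse).take j).sum

/-- Dominance order on partitions (encoded as multisets) of the same number. -/
def domLE (a b : Multiset ℕ) : Prop := a.sum = b.sum ∧ ∀ j, psum a j ≤ psum b j

/-- Strict dominance order. -/
def domLT (a b : Multiset ℕ) : Prop := domLE a b ∧ a ≠ b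

/-- Order on the variables: `y_S > y_T` iff `|S| > |T|`, or `|S| = |T|` and
`min (S \ T) < min (T \ S)`. -/
def varGt {n : ℕ} (S T : NES n) : Prop :=
  T.1.card < S.1.card ∨
    (S.1.card = T.1.card ∧ ∃ a ∈ S.1 \ T.1, ∀ b ∈ T.1 \ S.1, a < b)

/-- The graded lexicographic order on monomials (exponent vectors) of `ℂ[y_S]`. -/
def monLt {n : ℕ} (e f : NES n →₀ ℕ) : Prop :=
  (e.sum fun _ m => m) < (f.sum fun _ m => m) ∨
    ((e.sum fun _ m => m) = (f.sum fun _ m => m) ∧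
      ∃ S, e S < f S ∧ ∀ T, varGt T S → e T = f T)

/-- `e` is the leading monomial of `p`. -/
def IsLM {n : ℕ} (p : YRing n) (e : NES n →₀ ℕ) : Prop :=
  e ∈ p.support ∧ ∀ f ∈ p.support, f ≠ e → monLt f e

/-- The ideal of leading monomials of nonzero elements of `I`. -/
def LMideal {n : ℕ} (I : Ideal (YRing n)) : Ideal (YRing n) :=
  Ideal.span {q | ∃ p e, p ∈ I ∧ p ≠ 0 ∧ IsLM p e ∧ q = (monomial e 1 : YRing n)}

/-- `e_d(x_1^r, …, x_n^r)`. -/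
def esymmR (n r d : ℕ) : XRing n :=
  ∑ t ∈ (univ : Finset (Fin n)).powersetCard d, ∏ i ∈ t, X i ^ r

/-- The ideal `J_{n,k}` of Chan–Rhoades. -/
def Jx (n k r : ℕ) : Ideal (XRing n) :=
  Ideal.span ({p | ∃ i : Fin n, p = X i ^ (k * r)} ∪
    {p | ∃ d : ℕ, n - k + 1 ≤ d ∧ d ≤ n ∧ p = esymmR n r d})

/-- The ideal `I_{n,k}` of Chan–Rhoades. -/
def Ix (n k r : ℕ) : Ideal (XRing n) :=
  Ideal.span ({p | ∃ i : Fin n, p = X i ^ (k * r + 1)} ∪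
    {p | ∃ d : ℕ, n - k + 1 ≤ d ∧ d ≤ n ∧ p = esymmR n r d})

/-! ### Auxiliary development -/

section Aux

variable {n r : ℕ}

lemma mono_dvd_mono {d e : NES n →₀ ℕ} :
    (monomial d (1:ℂ) : YRing n) ∣ monomial e 1 ↔ d ≤ e := by
  rw [MvPolynomial.monomial_dvd_monomial]; simp

lemma X_mono (S : NES n) : (X S : YRing n) = monomial (Finsupp.single S 1) 1 := by
  rw [← X_pow_eq_monomial, pow_one]

lemma prod_mono {ι : Type*} (t : Finset ι) (d : ι → (NES n →₀ ℕ)) :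
    (∏ i ∈ t, (monomial (d i) (1:ℂ) : YRing n)) = monomial (∑ i ∈ t, d i) 1 := by
  induction t using Finset.cons_induction with
  | empty => simp
  | cons a t ha ih => rw [Finset.prod_cons, ih, Finset.sum_cons, monomial_mul, one_mul]

lemma mem_pref {w : CPerm n r} {a : Fin n} {t : ℕ} :
    a ∈ pref w t ↔ ∃ l : Fin n, (l:ℕ) < t ∧ w.letter l = a := by
  simp [pref]

lemma letter_mem_pref {w : CPerm n r} {j : Fin n} {t : ℕ} :
    w.letter j ∈ pref w t ↔ (j:ℕ) < t := by
  rw [mem_pref]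
  constructor
  · rintro ⟨l, hl, he⟩; rwa [w.inj he] at hl
  · exact fun h => ⟨j, h, rfl⟩

lemma card_filter_lt {t : ℕ} (ht : t ≤ n) :
    (univ.filter fun j : Fin n => (j:ℕ) < t).card = t := by
  have : (univ.filter fun j : Fin n => (j:ℕ) < t)
      = (univ : Finset (Fin t)).map (Fin.castLEEmb ht) := by
    ext a
    simp only [mem_filter, mem_univ, true_and, Finset.mem_map, Fin.castLEEmb, Fin.castLE]
    constructor
    · intro h; exact ⟨⟨a, h⟩, by simp⟩
    · rintro ⟨b, -, rfl⟩; simpa using b.isLt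
  rw [this, Finset.card_map, Finset.card_univ, Fintype.card_fin]

lemma pref_eq_image (w : CPerm n r) (t : ℕ) :
    pref w t = (univ.filter fun l : Fin n => (l:ℕ) < t).image w.letter := by
  ext a
  simp [mem_pref, eq_comm]

lemma card_pref (w : CPerm n r) {t : ℕ} (ht : t ≤ n) : (pref w t).card = t := by
  rw [pref_eq_image, Finset.card_image_of_injective _ w.inj, card_filter_lt ht]

lemma pref_mono (w : CPerm n r) {t t' : ℕ} (h : t ≤ t') : pref w t ⊆ pref w t' := by
  intro a ha
  rw [mem_pref] at ha ⊢
  obtain ⟨l, hl, he⟩ := ha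
  exact ⟨l, lt_of_lt_of_le hl h, he⟩

/-- `prefN w i` : the first `i+1` letters of `w`, as a nonempty set. -/
def prefN (w : CPerm n r) (i : Fin n) : NES n :=
  ⟨pref w ((i:ℕ)+1), ⟨w.letter i, letter_mem_pref.2 (Nat.lt_succ_self _)⟩⟩

lemma prefN_card (w : CPerm n r) (i : Fin n) : (prefN w i).1.card = (i:ℕ)+1 :=
  card_pref w i.isLt

lemma prefN_inj (w : CPerm n r) : Function.Injective (prefN w) := by
  intro i j h
  have := congrArg (fun S : NES n => S.1.card) h
  simp only [prefN_card] at this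
  exact Fin.ext (by omega)

lemma mem_DesSet_iff {w : CPerm n r} {i : Fin n} (h : (i:ℕ)+1 < n) :
    i ∈ DesSet w ↔ (w.color i < w.color ⟨(i:ℕ)+1, h⟩ ∨
      (w.color ⟨(i:ℕ)+1, h⟩ = w.color i ∧ w.letter ⟨(i:ℕ)+1, h⟩ < w.letter i)) := by
  simp only [DesSet, mem_filter, mem_univ, true_and]
  constructor
  · rintro ⟨j, hj, hc⟩
    have hj' : j = ⟨(i:ℕ)+1, h⟩ := Fin.ext hj
    subst hj'
    exact hc
  · intro hc
    exact ⟨⟨(i:ℕ)+1, h⟩, rfl, hc⟩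

lemma not_mem_DesSet_last {w : CPerm n r} {i : Fin n} (h : ¬ ((i:ℕ)+1 < n)) :
    i ∉ DesSet w := by
  simp only [DesSet, mem_filter, mem_univ, true_and]
  rintro ⟨j, hj, -⟩
  exact h (hj ▸ j.isLt)

lemma mExp_last {w : CPerm n r} {i : Fin n} (h : ¬ ((i:ℕ)+1 < n)) :
    mExp w i = (w.color i : ℕ) := by
  rw [mExp, dif_neg h, if_neg (not_mem_DesSet_last h)]
  simp

end Aux
section Aux2

variable {n r : ℕ}

lemma color_lt {w : CPerm n r} (i : Fin n) : (w.color i : ℕ) < r := (w.color i).isLt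

lemma not_des_color_le {w : CPerm n r} {i : Fin n} (h : (i:ℕ)+1 < n) (hd : i ∉ DesSet w) :
    (w.color ⟨(i:ℕ)+1, h⟩ : ℕ) ≤ (w.color i : ℕ) := by
  rw [mem_DesSet_iff h] at hd
  push_neg at hd
  exact hd.1

lemma des_color_le {w : CPerm n r} {i : Fin n} (h : (i:ℕ)+1 < n) (hd : i ∈ DesSet w) :
    (w.color i : ℕ) ≤ (w.color ⟨(i:ℕ)+1, h⟩ : ℕ) := by
  rw [mem_DesSet_iff h] at hd
  rcases hd with h1 | ⟨h1, -⟩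
  · exact le_of_lt h1
  · exact le_of_eq (congrArg Fin.val h1.symm)

lemma mExp_int {w : CPerm n r} {i : Fin n} (h : (i:ℕ)+1 < n) :
    (mExp w i : ℤ) = (w.color i : ℤ) - ((w.color ⟨(i:ℕ)+1, h⟩ : ℕ) : ℤ)
      + (if i ∈ DesSet w then (r:ℤ) else 0) := by
  rw [mExp, dif_pos h]
  rw [Int.toNat_of_nonneg]
  by_cases hd : i ∈ DesSet w
  · have := des_color_le h hd
    have hc := color_lt (w := w) ⟨(i:ℕ)+1, h⟩
    simp only [if_pos hd]
    omega
  · have := not_des_color_le h hd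
    simp only [if_neg hd]
    omega

lemma mExp_le {w : CPerm n r} (i : Fin n) : mExp w i ≤ r := by
  by_cases h : (i:ℕ)+1 < n
  · have := mExp_int (w := w) h
    by_cases hd : i ∈ DesSet w
    · have h1 := des_color_le h hd
      simp only [if_pos hd] at this
      omega
    · have h1 := not_des_color_le h hd
      have h2 := color_lt (w := w) i
      simp only [if_neg hd] at this
      omega
  · rw [mExp_last h]
    exact le_of_lt (color_lt i)

lemma mExp_eq_r {w : CPerm n r} {i : Fin n} (hr : 1 ≤ r) (hm : mExp w i = r) :
    ∃ h : (i:ℕ)+1 < n, w.letter ⟨(i:ℕ)+1, h⟩ < w.letter i := by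
  by_cases h : (i:ℕ)+1 < n
  · refine ⟨h, ?_⟩
    have hint := mExp_int (w := w) h
    by_cases hd : i ∈ DesSet w
    · simp only [if_pos hd] at hint
      rw [hm] at hint
      have hceq : (w.color ⟨(i:ℕ)+1, h⟩ : ℕ) = (w.color i : ℕ) := by omega
      rw [mem_DesSet_iff h] at hd
      rcases hd with h1 | ⟨-, h2⟩
      · exact absurd hceq (by rw [Fin.lt_def] at h1; omega)
      · exact h2
    · simp only [if_neg hd] at hint
      rw [hm] at hint
      have h2 := color_lt (w := w) i
      omega
  · rw [mExp_last h] at hm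
    exact absurd hm (by have := color_lt (w := w) i; omega)

/-- the color sequence as an integer-valued function on ℕ, 0 beyond the end -/
def colZ (w : CPerm n r) (t : ℕ) : ℤ := if h : t < n then ((w.color ⟨t, h⟩ : ℕ) : ℤ) else 0

lemma mExp_int' (w : CPerm n r) (i : Fin n) :
    (mExp w i : ℤ) = colZ w i - colZ w ((i:ℕ)+1) + (if i ∈ DesSet w then (r:ℤ) else 0) := by
  by_cases h : (i:ℕ)+1 < n
  · rw [mExp_int h, colZ, colZ, dif_pos h, dif_pos i.isLt]
  · rw [mExp_last h, colZ, colZ, dif_neg h, dif_pos i.isLt, if_neg (not_mem_DesSet_last h)]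
    ring

lemma sum_mExp (w : CPerm n r) (hn : 0 < n) :
    (∑ i : Fin n, (mExp w i : ℤ)) = ((w.color ⟨0, hn⟩ : ℕ) : ℤ) + r * desNum w := by
  have h1 : (∑ i : Fin n, (mExp w i : ℤ))
      = (∑ i : Fin n, (colZ w i - colZ w ((i:ℕ)+1)))
        + ∑ i : Fin n, (if i ∈ DesSet w then (r:ℤ) else 0) := by
    rw [← Finset.sum_add_distrib]
    exact Finset.sum_congr rfl fun i _ => mExp_int' w i
  rw [h1]
  have h2 : (∑ i : Fin n, (colZ w i - colZ w ((i:ℕ)+1)))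
      = colZ w 0 - colZ w n := by
    rw [Fin.sum_univ_eq_sum_range (fun t => colZ w t - colZ w (t+1))]
    exact Finset.sum_range_sub' (colZ w) n
  have h3 : (∑ i : Fin n, (if i ∈ DesSet w then (r:ℤ) else 0))
      = (r:ℤ) * desNum w := by
    rw [Finset.sum_ite_mem, Finset.univ_inter, Finset.sum_const, desNum]
    push_cast
    ring
  rw [h2, h3, colZ, colZ, dif_pos hn, dif_neg (lt_irrefl n)]
  ring

end Aux2
section Aux3

variable {n r : ℕ}

/-- The exponent vector of `btl w lam`. -/
def EofL (w : CPerm n r) (lam : List ℕ) : NES n →₀ ℕ :=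
  ∑ i : Fin n, Finsupp.single (prefN w i) (mExp w i + r * lam.count ((i:ℕ)+1))

lemma sum_single_apply_of_inj {ι : Type*} [Fintype ι] {g : ι → NES n}
    (hg : Function.Injective g) (c : ι → ℕ) (j : ι) :
    (∑ i : ι, Finsupp.single (g i) (c i)) (g j) = c j := by
  rw [Finsupp.finset_sum_apply]
  rw [Finset.sum_eq_single j]
  · simp
  · intro i _ hij
    rw [Finsupp.single_apply, if_neg (fun hh => hij (hg hh))]
  · intro h; exact absurd (Finset.mem_univ j) h

lemma sum_single_apply_ne {ι : Type*} [Fintype ι] {g : ι → NES n}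
    (c : ι → ℕ) {S : NES n} (hS : ∀ i, g i ≠ S) :
    (∑ i : ι, Finsupp.single (g i) (c i)) S = 0 := by
  rw [Finsupp.finset_sum_apply]
  apply Finset.sum_eq_zero
  intro i _
  rw [Finsupp.single_apply, if_neg (hS i)]

lemma EofL_apply (w : CPerm n r) (lam : List ℕ) (j : Fin n) :
    EofL w lam (prefN w j) = mExp w j + r * lam.count ((j:ℕ)+1) :=
  sum_single_apply_of_inj (prefN_inj w) _ j

lemma EofL_apply_ne (w : CPerm n r) (lam : List ℕ) {S : NES n}
    (hS : ∀ j, prefN w j ≠ S) : EofL w lam S = 0 :=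
  sum_single_apply_ne _ hS

lemma EofL_support (w : CPerm n r) (lam : List ℕ) {S : NES n}
    (hS : S ∈ (EofL w lam).support) : ∃ j, S = prefN w j := by
  by_contra hc
  push_neg at hc
  rw [Finsupp.mem_support_iff] at hS
  exact hS (EofL_apply_ne w lam fun j => fun hh => hc j hh.symm)

lemma Yv_pref (w : CPerm n r) (j : Fin n) : Yv (pref w ((j:ℕ)+1)) = X (prefN w j) := by
  rw [Yv, dif_pos (show (pref w ((j:ℕ)+1)).Nonempty from (prefN w j).2)]
  rfl

lemma btw_eq (w : CPerm n r) :
    btw w = monomial (∑ i : Fin n, Finsupp.single (prefN w i) (mExp w i)) 1 := by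
  rw [show btw w = ∏ i : Fin n, Yv (pref w ((i:ℕ)+1)) ^ mExp w i from rfl, ← prod_mono]
  apply Finset.prod_congr rfl
  intro i _
  rw [Yv_pref, X_mono, monomial_pow, one_pow, Finsupp.smul_single, smul_eq_mul, mul_one]

lemma list_part (w : CPerm n r) :
    ∀ lam : List ℕ, (∀ p ∈ lam, 1 ≤ p ∧ p ≤ n) →
    (lam.map fun p => Yv (pref w p) ^ r).prod
      = monomial (∑ i : Fin n, Finsupp.single (prefN w i) (r * lam.count ((i:ℕ)+1))) 1 := by
  intro lam
  induction lam with
  | nil => intro _; simp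
  | cons p lam ih =>
    intro hp
    have hp1 : 1 ≤ p ∧ p ≤ n := hp p List.mem_cons_self
    have hrest := ih (fun q hq => hp q (List.mem_cons_of_mem _ hq))
    set j : Fin n := ⟨p - 1, by omega⟩ with hj
    have hjp : (j:ℕ)+1 = p := by simp [hj]; omega
    rw [List.map_cons, List.prod_cons, hrest]
    have hxp : Yv (pref w p) ^ r = monomial (Finsupp.single (prefN w j) r) 1 := by
      rw [← hjp, Yv_pref, X_pow_eq_monomial]
    rw [hxp, monomial_mul, one_mul]
    congr 1
    have hc : ∀ i : Fin n, (p :: lam).count ((i:ℕ)+1)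
        = lam.count ((i:ℕ)+1) + (if i = j then 1 else 0) := by
      intro i
      rw [List.count_cons]
      by_cases hij : i = j
      · subst hij; simp [hjp]
      · have hne : ¬ (p = (i:ℕ)+1) := by
          intro hh; apply hij; apply Fin.ext; omega
        simp [hne, hij]
    have : (∑ i : Fin n, Finsupp.single (prefN w i) (r * (p :: lam).count ((i:ℕ)+1)))
        = (∑ i : Fin n, (Finsupp.single (prefN w i) (r * lam.count ((i:ℕ)+1))
            + Finsupp.single (prefN w i) (if i = j then r else 0))) := by
      apply Finset.sum_congr rfl
      intro i _
      rw [hc i, Nat.mul_add, Finsupp.single_add]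
      congr 1
      by_cases hij : i = j <;> simp [hij]
    rw [this, Finset.sum_add_distrib]
    rw [add_comm]
    congr 1
    have hsum := Finset.sum_eq_single (s := (univ : Finset (Fin n)))
      (f := fun x => Finsupp.single (prefN w x) (if x = j then r else 0)) j
      (fun i _ hij => by simp [hij]) (fun h => absurd (Finset.mem_univ j) h)
    rw [hsum]
    simp

lemma btl_eq (w : CPerm n r) (lam : List ℕ) (hlam : ∀ p ∈ lam, 1 ≤ p ∧ p ≤ n) :
    btl w lam = monomial (EofL w lam) 1 := by
  rw [show btl w lam = btw w * (lam.map fun p => Yv (pref w p) ^ r).prod from rfl, btw_eq,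
    list_part w lam hlam, monomial_mul, one_mul, EofL]
  have h : (∑ i : Fin n, Finsupp.single (prefN w i) (mExp w i))
        + (∑ i : Fin n, Finsupp.single (prefN w i) (r * lam.count ((i:ℕ)+1)))
      = ∑ i : Fin n, Finsupp.single (prefN w i) (mExp w i + r * lam.count ((i:ℕ)+1)) := by
    rw [← Finset.sum_add_distrib]
    exact Finset.sum_congr rfl fun i _ => (Finsupp.single_add _ _ _).symm
  rw [h]

lemma degsum_sum_single {ι : Type*} [Fintype ι] (g : ι → NES n) (c : ι → ℕ) :
    ((∑ i : ι, Finsupp.single (g i) (c i)).sum fun _ m => m) = ∑ i : ι, c i := by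
  classical
  rw [← Finsupp.sum_finset_sum_index (by simp) (by intros; rfl)]
  apply Finset.sum_congr rfl
  intro i _
  rw [Finsupp.sum_single_index rfl]

end Aux3
section Aux4

variable {n r : ℕ}

lemma dvd_XpXp {S T : NES n} (hST : S ≠ T) (a b : ℕ) {E : NES n →₀ ℕ} :
    (X S ^ a * X T ^ b : YRing n) ∣ monomial E 1 ↔ a ≤ E S ∧ b ≤ E T := by
  rw [X_pow_eq_monomial, X_pow_eq_monomial, monomial_mul, one_mul, mono_dvd_mono,
    Finsupp.le_def]
  constructor
  · intro h
    have h1 := h S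
    have h2 := h T
    simp [Finsupp.add_apply, Finsupp.single_apply, hST, Ne.symm hST] at h1 h2
    omega
  · rintro ⟨h1, h2⟩ c
    simp only [Finsupp.add_apply, Finsupp.single_apply]
    by_cases hS : S = c
    · subst hS
      rw [if_pos rfl, if_neg (Ne.symm hST)]
      omega
    · rw [if_neg hS]
      by_cases hT : T = c
      · subst hT; rw [if_pos rfl]; omega
      · rw [if_neg hT]; omega

lemma dvd_XX {S T : NES n} (hST : S ≠ T) {E : NES n →₀ ℕ} :
    (X S * X T : YRing n) ∣ monomial E 1 ↔ 1 ≤ E S ∧ 1 ≤ E T := by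
  rw [← pow_one (X S), ← pow_one (X T)]
  exact dvd_XpXp hST 1 1

lemma dvd_Xpow {S : NES n} (a : ℕ) {E : NES n →₀ ℕ} :
    (X S ^ a : YRing n) ∣ monomial E 1 ↔ a ≤ E S := by
  rw [X_pow_eq_monomial, mono_dvd_mono, Finsupp.le_def]
  constructor
  · intro h
    have := h S
    simpa using this
  · intro h c
    simp only [Finsupp.single_apply]
    by_cases hS : S = c
    · subst hS; rw [if_pos rfl]; exact h
    · rw [if_neg hS]; omega

lemma dvd_triple {S₁ S₂ S₃ : NES n} (h12 : S₁ ≠ S₂) (h13 : S₁ ≠ S₃) (h23 : S₂ ≠ S₃)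
    {E : NES n →₀ ℕ} :
    (X S₁ * X S₂ ^ r * X S₃ : YRing n) ∣ monomial E 1 ↔
      1 ≤ E S₁ ∧ r ≤ E S₂ ∧ 1 ≤ E S₃ := by
  rw [X_mono, X_pow_eq_monomial, X_mono, monomial_mul, monomial_mul, one_mul, one_mul,
    mono_dvd_mono, Finsupp.le_def]
  constructor
  · intro h
    have h1 := h S₁
    have h2 := h S₂
    have h3 := h S₃
    simp [Finsupp.add_apply, Finsupp.single_apply, h12, h13, h23,
      Ne.symm h12, Ne.symm h13, Ne.symm h23] at h1 h2 h3
    omega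
  · rintro ⟨h1, h2, h3⟩ c
    simp only [Finsupp.add_apply, Finsupp.single_apply]
    by_cases e1 : S₁ = c
    · subst e1
      rw [if_pos rfl, if_neg (Ne.symm h12), if_neg (Ne.symm h13)]  -- careful direction
      omega
    · rw [if_neg e1]
      by_cases e2 : S₂ = c
      · subst e2
        rw [if_pos rfl, if_neg (Ne.symm h23)]
        omega
      · rw [if_neg e2]
        by_cases e3 : S₃ = c
        · subst e3; rw [if_pos rfl]; omega
        · rw [if_neg e3]; omega

lemma prod_X_chain {m : ℕ} (C : Fin m → NES n) :
    (∏ i, X (C i) : YRing n) = monomial (∑ i, Finsupp.single (C i) 1) 1 := by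
  rw [← prod_mono]
  exact Finset.prod_congr rfl fun i _ => X_mono (C i)

lemma degsum_mono {d E : NES n →₀ ℕ} (h : d ≤ E) :
    (d.sum fun _ m => m) ≤ E.sum fun _ m => m := by
  classical
  rw [Finsupp.le_def] at h
  rw [Finsupp.sum, Finsupp.sum]
  have hsub : d.support ⊆ E.support := by
    intro a ha
    rw [Finsupp.mem_support_iff] at ha ⊢
    have := h a
    omega
  calc ∑ a ∈ d.support, d a ≤ ∑ a ∈ d.support, E a := Finset.sum_le_sum fun a _ => h a
    _ ≤ ∑ a ∈ E.support, E a := Finset.sum_le_sum_of_subset hsub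

lemma sum_count (lam : List ℕ) (hlam : ∀ p ∈ lam, 1 ≤ p ∧ p ≤ n) :
    ∑ i : Fin n, lam.count ((i:ℕ)+1) = lam.length := by
  induction lam with
  | nil => simp
  | cons p lam ih =>
    have hp1 : 1 ≤ p ∧ p ≤ n := hlam p List.mem_cons_self
    have hrest := ih (fun q hq => hlam q (List.mem_cons_of_mem _ hq))
    set j : Fin n := ⟨p - 1, by omega⟩ with hj
    have hjp : (j:ℕ)+1 = p := by simp [hj]; omega
    have hc : ∀ i : Fin n, (p :: lam).count ((i:ℕ)+1)
        = lam.count ((i:ℕ)+1) + (if i = j then 1 else 0) := by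
      intro i
      rw [List.count_cons]
      by_cases hij : i = j
      · subst hij; simp [hjp]
      · have hne : ¬ (p = (i:ℕ)+1) := by
          intro hh; apply hij; apply Fin.ext; omega
        simp [hne, hij]
    rw [Finset.sum_congr rfl fun i _ => hc i, Finset.sum_add_distrib, hrest]
    have hone : (∑ x : Fin n, if x = j then 1 else 0) = 1 := by simp
    rw [hone, List.length_cons]

end Aux4
section Fwd

variable {n k r : ℕ}

lemma lam_bounds (hk : k ≤ n) (o : OPIdx n k r) : ∀ p ∈ o.lam, 1 ≤ p ∧ p ≤ n :=
  fun p hp => ⟨o.pos p hp, le_trans (o.parts_le p hp) (Nat.sub_le n k)⟩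

lemma count_zero (o : OPIdx n k r) {t : ℕ} (ht : n - k + 1 ≤ t) : o.lam.count t = 0 := by
  rw [List.count_eq_zero]
  intro hmem
  have := o.parts_le t hmem
  omega

lemma exists_prefN {w : CPerm n r} {lam : List ℕ} {S : NES n} (h : 1 ≤ EofL w lam S) :
    ∃ j, S = prefN w j := by
  by_contra hc
  push_neg at hc
  rw [EofL_apply_ne w lam (fun j hh => hc j hh.symm)] at h
  omega

lemma E_big (o : OPIdx n k r) {j : Fin n} (hbig : n - k + 1 ≤ (j:ℕ)+1) :
    EofL o.g o.lam (prefN o.g j) = mExp o.g j := by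
  rw [EofL_apply, count_zero o hbig, Nat.mul_zero, Nat.add_zero]

/-- the key consequence of an exponent `r` at a large prefix set -/
lemma big_letter_desc (hr : 1 ≤ r) (o : OPIdx n k r) {j : Fin n}
    (hbig : n - k + 1 ≤ (j:ℕ)+1) (hE : r ≤ EofL o.g o.lam (prefN o.g j)) :
    ∃ h : (j:ℕ)+1 < n, o.g.letter ⟨(j:ℕ)+1, h⟩ < o.g.letter j := by
  rw [E_big o hbig] at hE
  exact mExp_eq_r hr (le_antisymm (mExp_le j) hE)

theorem forward_thm (hr : 1 ≤ r) (hn : 1 ≤ n) (hk : k ≤ n) (o : OPIdx n k r) :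
    ((¬ ∃ S T : NES n, ¬ S.1 ⊆ T.1 ∧ ¬ T.1 ⊆ S.1 ∧ X S * X T ∣ btOP o) ∧
       (¬ ∃ m : ℕ, n - k + 1 ≤ m ∧ m ≤ n ∧
          Yv (univ.filter fun j : Fin n => (j : ℕ) < m) ^ r ∣ btOP o) ∧
       (¬ ∃ S : NES n, n - k + 1 ≤ S.1.card ∧ X S ^ (r + 1) ∣ btOP o) ∧
       (¬ ∃ S T : NES n, S.1 ⊂ T.1 ∧ n - k + 1 ≤ S.1.card ∧
          (∀ a ∈ T.1 \ S.1, ∀ b ∈ S.1, b < a) ∧ X S ^ r * X T ∣ btOP o) ∧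
       (¬ ∃ S T : NES n, S.1 ⊂ T.1 ∧ n - k + 1 ≤ T.1.card ∧
          (∃ l : ℕ, T.1 = S.1 ∪ univ.filter fun j : Fin n => (j : ℕ) < l) ∧
          X S * X T ^ r ∣ btOP o) ∧
       (¬ ∃ S₁ S₂ S₃ : NES n, S₁.1 ⊂ S₂.1 ∧ S₂.1 ⊂ S₃.1 ∧ n - k + 1 ≤ S₂.1.card ∧
          (∀ a ∈ S₂.1 \ S₁.1, ∀ b ∈ S₃.1 \ S₂.1, a < b) ∧ X S₁ * X S₂ ^ r * X S₃ ∣ btOP o) ∧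
       (¬ ∃ C : Fin (k * r) → NES n, (∀ i j : Fin (k * r), i ≤ j → (C i).1 ⊆ (C j).1) ∧
          (∏ i, X (C i)) ∣ btOP o)) := by
  have hbt : btOP o = monomial (EofL o.g o.lam) 1 := btl_eq o.g o.lam (lam_bounds hk o)
  refine ⟨?_, ?_, ?_, ?_, ?_, ?_, ?_⟩
  · -- (1) incomparable pairs
    rintro ⟨S, T, hS, hT, hd⟩
    have hST : S ≠ T := fun h => hS (h ▸ subset_rfl)
    rw [hbt, dvd_XX hST] at hd
    obtain ⟨j, rfl⟩ := exists_prefN hd.1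
    obtain ⟨j', rfl⟩ := exists_prefN hd.2
    rcases le_total (j:ℕ) (j':ℕ) with h | h
    · exact hS (pref_mono o.g (by omega))
    · exact hT (pref_mono o.g (by omega))
  · -- (2) initial segments of size ≥ n-k+1 with exponent ≥ r
    rintro ⟨m, hm1, hm2, hd⟩
    have hFcard : (univ.filter fun j : Fin n => (j : ℕ) < m).card = m := card_filter_lt hm2
    have hF : (univ.filter fun j : Fin n => (j : ℕ) < m).Nonempty := by
      rw [← Finset.card_pos, hFcard]; omega
    rw [hbt, Yv, dif_pos hF, dvd_Xpow] at hd
    obtain ⟨j, hj⟩ := exists_prefN (le_trans hr hd)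
    have hcard : m = (j:ℕ)+1 := by
      have := congrArg (fun S : NES n => S.1.card) hj
      simp only [prefN_card] at this
      rw [← this, hFcard]
    obtain ⟨hjn, hlt⟩ := big_letter_desc hr o (by omega) (hj ▸ hd)
    have hmemF : ∀ a : Fin n, a ∈ (prefN o.g j).1 ↔ (a:ℕ) < m := by
      intro a
      rw [← hj]
      simp
    have h1 : (o.g.letter j : ℕ) < m := (hmemF _).1 (letter_mem_pref.2 (Nat.lt_succ_self _))
    have h2 : (o.g.letter ⟨(j:ℕ)+1, hjn⟩ : ℕ) < m := by
      have := hlt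
      rw [Fin.lt_def] at this
      omega
    have h3 : o.g.letter ⟨(j:ℕ)+1, hjn⟩ ∈ (prefN o.g j).1 := (hmemF _).2 h2
    have h4 : ((⟨(j:ℕ)+1, hjn⟩ : Fin n) : ℕ) < (j:ℕ)+1 := letter_mem_pref.1 h3
    simp at h4
  · -- (3) big sets with exponent ≥ r+1
    rintro ⟨S, hbig, hd⟩
    rw [hbt, dvd_Xpow] at hd
    obtain ⟨j, rfl⟩ := exists_prefN (le_trans (by omega) hd)
    rw [prefN_card] at hbig
    rw [E_big o hbig] at hd
    have := mExp_le (w := o.g) j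
    omega
  · -- (4)
    rintro ⟨S, T, hsub, hbig, hmin, hd⟩
    have hST : S ≠ T := fun h => (h ▸ hsub).ne rfl
    rw [hbt, ← pow_one (X T), dvd_XpXp hST] at hd
    obtain ⟨j, rfl⟩ := exists_prefN (le_trans hr hd.1)
    obtain ⟨j', rfl⟩ := exists_prefN hd.2
    rw [prefN_card] at hbig
    obtain ⟨hjn, hlt⟩ := big_letter_desc hr o hbig hd.1
    have hjj' : (j:ℕ) < (j':ℕ) := by
      have hc := Finset.card_lt_card hsub
      rw [prefN_card, prefN_card] at hc
      omega
    have ha : o.g.letter ⟨(j:ℕ)+1, hjn⟩ ∈ (prefN o.g j').1 \ (prefN o.g j).1 := by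
      rw [Finset.mem_sdiff]
      constructor
      · exact letter_mem_pref.2 (by simp; omega)
      · intro hmem
        have := letter_mem_pref.1 hmem
        simp at this
    have hb : o.g.letter j ∈ (prefN o.g j).1 := letter_mem_pref.2 (Nat.lt_succ_self _)
    have := hmin _ ha _ hb
    exact absurd this (not_lt.2 (le_of_lt hlt))
  · -- (5)
    rintro ⟨S, T, hsub, hbig, ⟨l, hl⟩, hd⟩
    have hST : S ≠ T := fun h => (h ▸ hsub).ne rfl
    rw [hbt, ← pow_one (X S), dvd_XpXp hST] at hd
    obtain ⟨j', rfl⟩ := exists_prefN hd.1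
    obtain ⟨j, rfl⟩ := exists_prefN (le_trans hr hd.2)
    rw [prefN_card] at hbig
    obtain ⟨hjn, hlt⟩ := big_letter_desc hr o hbig hd.2
    have hjj' : (j':ℕ) < (j:ℕ) := by
      have hc := Finset.card_lt_card hsub
      rw [prefN_card, prefN_card] at hc
      omega
    have hmemj : o.g.letter j ∈ (prefN o.g j).1 := letter_mem_pref.2 (Nat.lt_succ_self _)
    have hnotS : o.g.letter j ∉ (prefN o.g j').1 := by
      intro hmem
      have := letter_mem_pref.1 hmem
      simp at this
      omega
    have hfil : (o.g.letter j : ℕ) < l := by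
      rw [hl, Finset.mem_union] at hmemj
      rcases hmemj with h | h
      · exact absurd h hnotS
      · simpa using h
    have h2 : o.g.letter ⟨(j:ℕ)+1, hjn⟩ ∈ (prefN o.g j).1 := by
      rw [hl, Finset.mem_union]
      right
      simp only [Finset.mem_filter, Finset.mem_univ, true_and]
      rw [Fin.lt_def] at hlt
      omega
    have h4 := letter_mem_pref.1 h2
    simp at h4
  · -- (6)
    rintro ⟨S₁, S₂, S₃, h12, h23, hbig, hcmp, hd⟩
    have hne12 : S₁ ≠ S₂ := fun h => (h ▸ h12).ne rfl
    have hne23 : S₂ ≠ S₃ := fun h => (h ▸ h23).ne rfl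
    have hne13 : S₁ ≠ S₃ := fun h => (h ▸ (h12.trans h23)).ne rfl
    rw [hbt, dvd_triple hne12 hne13 hne23] at hd
    obtain ⟨j₁, rfl⟩ := exists_prefN hd.1
    obtain ⟨j₂, rfl⟩ := exists_prefN (le_trans hr hd.2.1)
    obtain ⟨j₃, rfl⟩ := exists_prefN hd.2.2
    rw [prefN_card] at hbig
    obtain ⟨hjn, hlt⟩ := big_letter_desc hr o hbig hd.2.1
    have hj12 : (j₁:ℕ) < (j₂:ℕ) := by
      have hc := Finset.card_lt_card h12
      rw [prefN_card, prefN_card] at hc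
      omega
    have hj23 : (j₂:ℕ) < (j₃:ℕ) := by
      have hc := Finset.card_lt_card h23
      rw [prefN_card, prefN_card] at hc
      omega
    have ha : o.g.letter j₂ ∈ (prefN o.g j₂).1 \ (prefN o.g j₁).1 := by
      rw [Finset.mem_sdiff]
      refine ⟨letter_mem_pref.2 (Nat.lt_succ_self _), ?_⟩
      intro hmem
      have := letter_mem_pref.1 hmem
      omega
    have hb : o.g.letter ⟨(j₂:ℕ)+1, hjn⟩ ∈ (prefN o.g j₃).1 \ (prefN o.g j₂).1 := by
      rw [Finset.mem_sdiff]
      constructor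
      · exact letter_mem_pref.2 (by simp; omega)
      · intro hmem
        have := letter_mem_pref.1 hmem
        simp at this
    have := hcmp _ ha _ hb
    exact absurd this (not_lt.2 (le_of_lt hlt))
  · -- (7)
    rintro ⟨C, hC, hd⟩
    rw [hbt, prod_X_chain, mono_dvd_mono] at hd
    have hdegd : ((∑ i : Fin (k*r), Finsupp.single (C i) 1).sum fun _ m => m) = k * r := by
      rw [degsum_sum_single]
      simp
    have hdegE : ((EofL o.g o.lam).sum fun _ m => m)
        = (∑ i : Fin n, mExp o.g i) + r * o.lam.length := by
      rw [EofL, degsum_sum_single, Finset.sum_add_distrib, ← Finset.mul_sum,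
        sum_count o.lam (lam_bounds hk o)]
    have hk1 : 1 ≤ k := by have := o.len; omega
    have hsm : (∑ i : Fin n, mExp o.g i) = (o.g.color ⟨0, hn⟩ : ℕ) + r * desNum o.g := by
      have h1 := sum_mExp o.g hn
      have h2 : ((∑ i : Fin n, mExp o.g i : ℕ) : ℤ) = ∑ i : Fin n, (mExp o.g i : ℤ) := by
        push_cast
        rfl
      rw [← h2] at h1
      exact_mod_cast h1
    have hlen := o.len
    have hc0 : (o.g.color ⟨0, hn⟩ : ℕ) < r := (o.g.color ⟨0, hn⟩).isLt
    have hmul : r * desNum o.g + r * o.lam.length ≤ r * (k - 1) := by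
      rw [← Nat.mul_add]
      exact Nat.mul_le_mul_left r (by omega)
    have hkr : r * (k - 1) + r = k * r := by
      cases k with
      | zero => omega
      | succ k' => simp [Nat.succ_sub_one]; ring
    have hle := degsum_mono hd
    rw [hdegd, hdegE, hsm] at hle
    omega

end Fwd
section ChainEx

variable {n : ℕ}

lemma one_le_sum_single_apply {d : ℕ} (C : Fin d → NES n) (i₀ : Fin d) :
    1 ≤ (∑ i : Fin d, Finsupp.single (C i) 1) (C i₀) := by
  rw [Finsupp.finset_sum_apply]
  have h1 : (Finsupp.single (C i₀) 1 : NES n →₀ ℕ) (C i₀) = 1 := by simp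
  calc (1:ℕ) = Finsupp.single (C i₀) 1 (C i₀) := h1.symm
    _ ≤ ∑ i : Fin d, Finsupp.single (C i) 1 (C i₀) :=
        Finset.single_le_sum (f := fun i : Fin d => (Finsupp.single (C i) 1 : NES n →₀ ℕ) (C i₀))
          (fun i _ => Nat.zero_le _) (Finset.mem_univ i₀)

lemma chain_exists :
    ∀ (d : ℕ) (E : NES n →₀ ℕ),
      (∀ S ∈ E.support, ∀ T ∈ E.support, S.1 ⊆ T.1 ∨ T.1 ⊆ S.1) →
      d ≤ (E.sum fun _ m => m) →
      ∃ C : Fin d → NES n, (∀ i j : Fin d, i ≤ j → (C i).1 ⊆ (C j).1) ∧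
        (∑ i : Fin d, Finsupp.single (C i) 1) ≤ E := by
  intro d
  induction d with
  | zero =>
    intro E _ _
    exact ⟨Fin.elim0, fun i => i.elim0, by simp⟩
  | succ d ih =>
    intro E hch hdeg
    have hne : E.support.Nonempty := by
      by_contra h
      rw [Finset.not_nonempty_iff_eq_empty] at h
      rw [Finsupp.sum, h] at hdeg
      simp at hdeg
    obtain ⟨S, hS, hmax⟩ := Finset.exists_max_image E.support (fun T => T.1.card) hne
    have hES : 1 ≤ E S := by
      rw [Finsupp.mem_support_iff] at hS
      omega
    set E' : NES n →₀ ℕ := E - Finsupp.single S 1 with hE'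
    have hsplit : E' + Finsupp.single S 1 = E := by
      ext a
      rw [Finsupp.add_apply, hE', Finsupp.tsub_apply]
      by_cases ha : a = S
      · subst ha
        simp [Finsupp.single_apply]
        omega
      · simp only [Finsupp.single_apply, if_neg (fun hh : S = a => ha hh.symm)]
        omega
    have hsupp' : E'.support ⊆ E.support := by
      intro a ha
      rw [Finsupp.mem_support_iff] at ha ⊢
      rw [hE', Finsupp.tsub_apply] at ha
      omega
    have hdeg' : d ≤ (E'.sum fun _ m => m) := by
      have h1 : (E.sum fun _ m => m) = (E'.sum fun _ m => m) + 1 := by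
        rw [← hsplit, Finsupp.sum_add_index' (fun _ => rfl) (fun _ _ _ => rfl)]
        rw [Finsupp.sum_single_index rfl]
      omega
    obtain ⟨C', hmono', hle'⟩ := ih E' (fun a ha b hb => hch a (hsupp' ha) b (hsupp' hb)) hdeg'
    have hmem : ∀ i : Fin d, C' i ∈ E.support := by
      intro i
      apply hsupp'
      rw [Finsupp.mem_support_iff]
      have h1 := one_le_sum_single_apply C' i
      have h2 := (Finsupp.le_def.1 hle') (C' i)
      omega
    have hsub : ∀ i : Fin d, (C' i).1 ⊆ S.1 := by
      intro i
      rcases hch _ (hmem i) _ hS with h | h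
      · exact h
      · rw [Finset.eq_of_subset_of_card_le h (hmax _ (hmem i))]
    refine ⟨fun i => if h : (i:ℕ) < d then C' ⟨(i:ℕ), h⟩ else S, ?_, ?_⟩
    · intro i j hij
      dsimp only
      by_cases hi : (i:ℕ) < d
      · by_cases hj : (j:ℕ) < d
        · rw [dif_pos hi, dif_pos hj]
          exact hmono' _ _ hij
        · rw [dif_pos hi, dif_neg hj]
          exact hsub _
      · have hj : ¬ ((j:ℕ) < d) := by
          have := Fin.le_def.1 hij
          omega
        rw [dif_neg hi, dif_neg hj]
    · have hsum : (∑ i : Fin (d+1), Finsupp.single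
          ((if h : (i:ℕ) < d then C' ⟨(i:ℕ), h⟩ else S)) 1)
          = (∑ i : Fin d, Finsupp.single (C' i) 1) + Finsupp.single S 1 := by
        rw [Fin.sum_univ_castSucc]
        congr 1
        · apply Finset.sum_congr rfl
          intro i _
          rw [dif_pos (by simpa using i.isLt : ((Fin.castSucc i : Fin (d+1)) : ℕ) < d)]
          exact congrArg (fun x => Finsupp.single (C' x) 1) (Fin.ext (by simp))
        · rw [dif_neg (by simp)]
      rw [hsum, ← hsplit]
      exact add_le_add hle' le_rfl
end ChainEx
section Bwd

variable {n r : ℕ}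

/-- number of chain sets not containing `a` -/
def Na (E : NES n →₀ ℕ) (a : Fin n) : ℕ := (E.support.filter (fun T => a ∉ T.1)).card

def keyE (E : NES n →₀ ℕ) (a : Fin n) : ℕ := Na E a * n + (a:ℕ)

def DE (E : NES n →₀ ℕ) (j : ℕ) : ℕ :=
  ∑ T ∈ E.support.filter (fun T => j < T.1.card), E T

lemma keyE_inj (E : NES n →₀ ℕ) : Function.Injective (keyE E) := by
  intro a b h
  unfold keyE at h
  have ha := a.isLt
  have hb := b.isLt
  have h1 : ((a:ℕ) + Na E a * n) % n = ((b:ℕ) + Na E b * n) % n := by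
    rw [show (a:ℕ) + Na E a * n = Na E a * n + (a:ℕ) by ring,
      show (b:ℕ) + Na E b * n = Na E b * n + (b:ℕ) by ring, h]
  rw [Nat.add_mul_mod_self_right, Nat.add_mul_mod_self_right,
    Nat.mod_eq_of_lt ha, Nat.mod_eq_of_lt hb] at h1
  exact Fin.ext h1

/-- The colored permutation built from a chain monomial. -/
def wE (E : NES n →₀ ℕ) (hr : 0 < r) : CPerm n r where
  letter := fun j => Tuple.sort (keyE E) j
  inj := (Tuple.sort (keyE E)).injective
  color := fun j => ⟨DE E (j:ℕ) % r, Nat.mod_lt _ hr⟩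

lemma key_letter_mono (E : NES n →₀ ℕ) (hr : 0 < r) :
    StrictMono (fun j : Fin n => keyE E ((wE E hr).letter j)) := by
  have hmono : Monotone (keyE E ∘ Tuple.sort (keyE E)) := Tuple.monotone_sort (keyE E)
  have hinj : Function.Injective (keyE E ∘ Tuple.sort (keyE E)) :=
    (keyE_inj E).comp (Tuple.sort (keyE E)).injective
  exact hmono.strictMono_of_injective hinj

lemma letter_surj (E : NES n →₀ ℕ) (hr : 0 < r) (a : Fin n) :
    ∃ l : Fin n, (wE E hr).letter l = a :=
  ⟨(Tuple.sort (keyE E)).symm a, (Tuple.sort (keyE E)).apply_symm_apply a⟩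

variable {E : NES n →₀ ℕ}

/-- the chain hypothesis -/
def ChainH (E : NES n →₀ ℕ) : Prop :=
  ∀ S ∈ E.support, ∀ T ∈ E.support, S.1 ⊆ T.1 ∨ T.1 ⊆ S.1

lemma Na_lt (hch : ChainH E) {T : NES n} (hT : T ∈ E.support) {a b : Fin n}
    (ha : a ∈ T.1) (hb : b ∉ T.1) : Na E a < Na E b := by
  have hsub : E.support.filter (fun T' => a ∉ T'.1) ⊆ E.support.filter (fun T' => b ∉ T'.1) := by
    intro T' hT'
    rw [Finset.mem_filter] at hT' ⊢
    refine ⟨hT'.1, ?_⟩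
    rcases hch T' hT'.1 T hT with h | h
    · exact fun hbT' => hb (h hbT')
    · exact absurd (h ha) hT'.2
  apply Finset.card_lt_card
  rw [Finset.ssubset_iff_of_subset hsub]
  exact ⟨T, Finset.mem_filter.2 ⟨hT, hb⟩, fun hmem => (Finset.mem_filter.1 hmem).2 ha⟩

lemma keyE_lt (hch : ChainH E) {T : NES n} (hT : T ∈ E.support) {a b : Fin n}
    (ha : a ∈ T.1) (hb : b ∉ T.1) : keyE E a < keyE E b := by
  have h := Na_lt hch hT ha hb
  have ha' := a.isLt
  calc Na E a * n + (a:ℕ) < Na E a * n + n := by omega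
    _ = (Na E a + 1) * n := by ring
    _ ≤ Na E b * n := Nat.mul_le_mul_right n h
    _ ≤ Na E b * n + (b:ℕ) := Nat.le_add_right _ _

lemma pref_eq (hr : 0 < r) (hch : ChainH E) {T : NES n} (hT : T ∈ E.support) :
    pref (wE E hr) T.1.card = T.1 := by
  have hTn : T.1.card ≤ n := by
    have := Finset.card_le_card (Finset.subset_univ T.1)
    simpa using this
  have hTsub : T.1 ⊆ pref (wE E hr) T.1.card := by
    intro a ha
    obtain ⟨j, hj⟩ := letter_surj E hr a
    have himg : ((univ.filter fun l : Fin n => (l:ℕ) < (j:ℕ)).image (wE E hr).letter)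
        ⊆ T.1.erase a := by
      intro b hb
      rw [Finset.mem_image] at hb
      obtain ⟨l, hl, rfl⟩ := hb
      rw [Finset.mem_filter] at hl
      have hkey : keyE E ((wE E hr).letter l) < keyE E ((wE E hr).letter j) :=
        key_letter_mono E hr (show l < j from hl.2)
      rw [Finset.mem_erase]
      constructor
      · intro heq
        rw [heq, hj] at hkey
        exact Nat.lt_irrefl _ hkey
      · by_contra hbT
        rw [hj] at hkey
        have := keyE_lt hch hT ha hbT
        omega
    have hjcard : (j:ℕ) ≤ T.1.card - 1 := by
      have h1 : ((univ.filter fun l : Fin n => (l:ℕ) < (j:ℕ)).image (wE E hr).letter).card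
          = (j:ℕ) := by
        rw [Finset.card_image_of_injective _ (wE E hr).inj, card_filter_lt (le_of_lt j.isLt)]
      have h2 := Finset.card_le_card himg
      rw [h1, Finset.card_erase_of_mem ha] at h2
      exact h2
    rw [← hj]
    apply letter_mem_pref.2
    have hTpos : 1 ≤ T.1.card := Finset.card_pos.2 T.2
    omega
  exact (Finset.eq_of_subset_of_card_le hTsub (le_of_eq (card_pref _ hTn))).symm

lemma letter_mem_iff (hr : 0 < r) (hch : ChainH E) {T : NES n} (hT : T ∈ E.support)
    (j : Fin n) : (wE E hr).letter j ∈ T.1 ↔ (j:ℕ) < T.1.card := by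
  conv_lhs => rw [← pref_eq hr hch hT]
  exact letter_mem_pref

lemma chain_card_eq (hr : 0 < r) (hch : ChainH E) {T : NES n} (hT : T ∈ E.support)
    {i : Fin n} (hc : T.1.card = (i:ℕ)+1) : T = prefN (wE E hr) i := by
  apply Subtype.ext
  have := pref_eq hr hch hT
  rw [hc] at this
  exact this.symm

lemma Na_letter (hr : 0 < r) (hch : ChainH E) (j : Fin n) :
    Na E ((wE E hr).letter j) = (E.support.filter fun T => T.1.card ≤ (j:ℕ)).card := by
  unfold Na
  congr 1
  apply Finset.filter_congr
  intro T hT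
  rw [letter_mem_iff hr hch hT j]
  exact not_lt

lemma val_le_letter (hr : 0 < r) {i a : Fin n}
    (ha : a ∈ (prefN (wE E hr) i).1)
    (hNa : Na E a = Na E ((wE E hr).letter i)) :
    (a:ℕ) ≤ ((wE E hr).letter i : ℕ) := by
  obtain ⟨l, hl, hla⟩ := mem_pref.1 ha
  have hli : l ≤ i := by
    apply Fin.le_def.2
    omega
  have := (key_letter_mono E hr).monotone hli
  rw [hla] at this
  unfold keyE at this
  rw [hNa] at this
  omega

lemma letter_le_val (hr : 0 < r) {i b : Fin n}
    (hb : b ∉ (prefN (wE E hr) i).1) (hin : (i:ℕ)+1 < n)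
    (hNa : Na E ((wE E hr).letter ⟨(i:ℕ)+1, hin⟩) = Na E b) :
    ((wE E hr).letter ⟨(i:ℕ)+1, hin⟩ : ℕ) ≤ (b:ℕ) := by
  obtain ⟨q, hq⟩ := letter_surj E hr b
  have hqge : (⟨(i:ℕ)+1, hin⟩ : Fin n) ≤ q := by
    apply Fin.le_def.2
    simp only
    by_contra hc
    push_neg at hc
    exact hb (hq ▸ letter_mem_pref.2 (by omega))
  have := (key_letter_mono E hr).monotone hqge
  rw [hq] at this
  unfold keyE at this
  rw [hNa] at this
  omega

end Bwd
section Bwd2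

variable {n r : ℕ} {E : NES n →₀ ℕ}

lemma DE_zero (E : NES n →₀ ℕ) {j : ℕ} (hj : n ≤ j) : DE E j = 0 := by
  unfold DE
  apply Finset.sum_eq_zero
  intro T hT
  rw [Finset.mem_filter] at hT
  exfalso
  have : T.1.card ≤ n := by
    have := Finset.card_le_card (Finset.subset_univ T.1)
    simpa using this
  omega

lemma DE_split (E : NES n →₀ ℕ) (j : ℕ) :
    DE E j = (∑ T ∈ E.support.filter (fun T => T.1.card = j+1), E T) + DE E (j+1) := by
  unfold DE
  rw [← Finset.sum_union]
  · congr 1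
    ext T
    simp only [Finset.mem_union, Finset.mem_filter]
    constructor
    · rintro ⟨h1, h2⟩
      by_cases hc : T.1.card = j+1
      · exact Or.inl ⟨h1, hc⟩
      · exact Or.inr ⟨h1, by omega⟩
    · rintro (⟨h1, h2⟩ | ⟨h1, h2⟩) <;> exact ⟨h1, by omega⟩
  · rw [Finset.disjoint_filter]
    intro T _ h1
    omega

lemma eAt_of_mem (hr : 0 < r) (hch : ChainH E) {i : Fin n}
    (hmem : prefN (wE E hr) i ∈ E.support) :
    (∑ T ∈ E.support.filter (fun T => T.1.card = (i:ℕ)+1), E T) = E (prefN (wE E hr) i) := by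
  have hfil : E.support.filter (fun T => T.1.card = (i:ℕ)+1) = {prefN (wE E hr) i} := by
    ext T
    simp only [Finset.mem_filter, Finset.mem_singleton]
    constructor
    · rintro ⟨h1, h2⟩
      exact chain_card_eq hr hch h1 h2
    · rintro rfl
      exact ⟨hmem, prefN_card _ _⟩
  rw [hfil, Finset.sum_singleton]

lemma eAt_of_not (hr : 0 < r) (hch : ChainH E) {i : Fin n}
    (hnot : prefN (wE E hr) i ∉ E.support) :
    (∑ T ∈ E.support.filter (fun T => T.1.card = (i:ℕ)+1), E T) = 0 := by
  apply Finset.sum_eq_zero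
  intro T hT
  rw [Finset.mem_filter] at hT
  exact absurd (chain_card_eq hr hch hT.1 hT.2 ▸ hT.1) hnot

lemma color_val (hr : 0 < r) (j : Fin n) :
    ((wE E hr).color j : ℕ) = DE E (j:ℕ) % r := rfl

lemma mExp_mod (hr : 0 < r) (hch : ChainH E) (i : Fin n)
    (hmem : prefN (wE E hr) i ∈ E.support) :
    mExp (wE E hr) i % r = E (prefN (wE E hr) i) % r := by
  set e := E (prefN (wE E hr) i) with he
  by_cases hin : (i:ℕ)+1 < n
  · have h1 : ((mExp (wE E hr) i : ℤ)) % r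
        = (((wE E hr).color i : ℕ) - ((wE E hr).color ⟨(i:ℕ)+1, hin⟩ : ℕ) : ℤ) % r := by
      rw [mExp_int hin]
      by_cases hd : i ∈ DesSet (wE E hr)
      · rw [if_pos hd, show ((((wE E hr).color i : ℕ) : ℤ) - (((wE E hr).color ⟨(i:ℕ)+1, hin⟩ : ℕ) : ℤ) + (r:ℤ))
            = (((wE E hr).color i : ℕ) : ℤ) - (((wE E hr).color ⟨(i:ℕ)+1, hin⟩ : ℕ) : ℤ) + (r:ℤ) * 1 by ring,
          Int.add_mul_emod_self_left]
      · rw [if_neg hd, add_zero]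
    have hDE : DE E (i:ℕ) = e + DE E ((i:ℕ)+1) := by
      rw [DE_split E (i:ℕ), eAt_of_mem hr hch hmem]
    have h2 : (((wE E hr).color i : ℕ) - ((wE E hr).color ⟨(i:ℕ)+1, hin⟩ : ℕ) : ℤ) % r
        = (e : ℤ) % r := by
      rw [color_val hr, color_val hr]
      push_cast
      rw [← Int.sub_emod]
      rw [hDE]
      push_cast
      rw [show ((e:ℤ) + (DE E ((i:ℕ)+1) : ℤ)) - (DE E ((i:ℕ)+1) : ℤ) = (e:ℤ) by ring]
    have h3 : ((mExp (wE E hr) i : ℤ)) % r = (e : ℤ) % r := h1.trans h2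
    have h4 : ((mExp (wE E hr) i % r : ℕ) : ℤ) = ((e % r : ℕ) : ℤ) := by
      push_cast
      exact h3
    exact_mod_cast h4
  · rw [mExp_last hin, color_val hr]
    have hDE : DE E (i:ℕ) = e + DE E ((i:ℕ)+1) := by
      rw [DE_split E (i:ℕ), eAt_of_mem hr hch hmem]
    rw [DE_zero E (by omega : n ≤ (i:ℕ)+1)] at hDE
    rw [hDE, Nat.add_zero]
    exact Nat.mod_mod_of_dvd e (dvd_refl r)

lemma mExp_zero_of_not (hr : 0 < r) (hch : ChainH E) (i : Fin n)
    (hnot : prefN (wE E hr) i ∉ E.support) :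
    mExp (wE E hr) i = 0 := by
  have hDE : DE E (i:ℕ) = DE E ((i:ℕ)+1) := by
    rw [DE_split E (i:ℕ), eAt_of_not hr hch hnot, Nat.zero_add]
  by_cases hin : (i:ℕ)+1 < n
  · have hceq : (wE E hr).color i = (wE E hr).color ⟨(i:ℕ)+1, hin⟩ := by
      apply Fin.ext
      rw [color_val hr, color_val hr, hDE]
    have hNaeq : Na E ((wE E hr).letter i) = Na E ((wE E hr).letter ⟨(i:ℕ)+1, hin⟩) := by
      rw [Na_letter hr hch, Na_letter hr hch]
      congr 1
      apply Finset.filter_congr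
      intro T hT
      have hne : T.1.card ≠ (i:ℕ)+1 := by
        intro hc
        exact hnot (chain_card_eq hr hch hT hc ▸ hT)
      simp only
      constructor <;> intro h <;> omega
    have hlt : ((wE E hr).letter i : ℕ) < ((wE E hr).letter ⟨(i:ℕ)+1, hin⟩ : ℕ) := by
      have hk0 := key_letter_mono E hr (show i < ⟨(i:ℕ)+1, hin⟩ by
        rw [Fin.lt_def]; simp)
      have hk : keyE E ((wE E hr).letter i) < keyE E ((wE E hr).letter ⟨(i:ℕ)+1, hin⟩) := hk0
      unfold keyE at hk
      rw [hNaeq] at hk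
      omega
    have hdes : i ∉ DesSet (wE E hr) := by
      intro hdes
      rcases (mem_DesSet_iff hin).1 hdes with h | ⟨-, h⟩
      · rw [hceq] at h; exact lt_irrefl _ h
      · rw [Fin.lt_def] at h; omega
    have := mExp_int (w := wE E hr) hin
    rw [if_neg hdes, add_zero] at this
    have hcv : ((wE E hr).color i : ℕ) = ((wE E hr).color ⟨(i:ℕ)+1, hin⟩ : ℕ) := by
      rw [hceq]
    omega
  · rw [mExp_last hin, color_val hr, hDE, DE_zero E (by omega : n ≤ (i:ℕ)+1)]
    exact Nat.zero_mod r

lemma m_le_and_dvd (hr : 0 < r) (hch : ChainH E) (i : Fin n)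
    (hmem : prefN (wE E hr) i ∈ E.support) :
    mExp (wE E hr) i ≤ E (prefN (wE E hr) i)
      ∧ r ∣ (E (prefN (wE E hr) i) - mExp (wE E hr) i) := by
  set m := mExp (wE E hr) i with hm
  set e := E (prefN (wE E hr) i) with he
  have hmod : m % r = e % r := mExp_mod hr hch i hmem
  have hle : m ≤ r := mExp_le i
  have he1 : 1 ≤ e := by
    rw [Finsupp.mem_support_iff] at hmem
    omega
  by_cases hmr : m = r
  · have h0 : e % r = 0 := by
      rw [← hmod, hmr, Nat.mod_self]
    have hdvd : r ∣ e := Nat.dvd_of_mod_eq_zero h0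
    have hre : r ≤ e := Nat.le_of_dvd (by omega) hdvd
    exact ⟨by omega, by rw [hmr]; exact Nat.dvd_sub hdvd (dvd_refl r)⟩
  · have hmlt : m < r := by omega
    have hme : m = e % r := by
      rw [← hmod, Nat.mod_eq_of_lt hmlt]
    have hmle : m ≤ e := hme ▸ Nat.mod_le e r
    refine ⟨hmle, ⟨e / r, ?_⟩⟩
    have := Nat.mod_add_div e r
    omega

end Bwd2
section Bwd3

variable {n r : ℕ} {E : NES n →₀ ℕ}

def cntE (E : NES n →₀ ℕ) (hr : 0 < r) (i : Fin n) : ℕ :=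
  (E (prefN (wE E hr) i) - mExp (wE E hr) i) / r

def ME (E : NES n →₀ ℕ) (hr : 0 < r) : Multiset ℕ :=
  ∑ i : Fin n, Multiset.replicate (cntE E hr i) ((i:ℕ)+1)

def lamE (E : NES n →₀ ℕ) (hr : 0 < r) : List ℕ := (ME E hr).sort (· ≥ ·)

lemma lamE_sorted (hr : 0 < r) : (lamE E hr).Pairwise (· ≥ ·) :=
  Multiset.pairwise_sort ..

lemma mem_lamE {hr : 0 < r} {p : ℕ} (hp : p ∈ lamE E hr) :
    ∃ i : Fin n, p = (i:ℕ)+1 ∧ 0 < cntE E hr i := by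
  rw [lamE, Multiset.mem_sort, ME] at hp
  obtain ⟨i, -, hi⟩ := Multiset.mem_sum.1 hp
  rw [Multiset.mem_replicate] at hi
  exact ⟨i, hi.2, by omega⟩

lemma count_lamE (hr : 0 < r) (i : Fin n) :
    (lamE E hr).count ((i:ℕ)+1) = cntE E hr i := by
  rw [lamE, ← Multiset.coe_count, Multiset.sort_eq, ME, Multiset.count_sum']
  rw [Finset.sum_eq_single i (fun j _ hj => ?_) (fun h => absurd (Finset.mem_univ i) h)]
  · rw [Multiset.count_replicate, if_pos rfl]
  · rw [Multiset.count_replicate, if_neg ?_]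
    intro h
    exact hj (Fin.ext (by omega)).symm

lemma multiset_card_sum {ι : Type*} (s : Finset ι) (f : ι → Multiset ℕ) :
    Multiset.card (∑ i ∈ s, f i) = ∑ i ∈ s, Multiset.card (f i) := by
  induction s using Finset.cons_induction with
  | empty => simp
  | cons a t ha ih => rw [Finset.sum_cons, Multiset.card_add, ih, Finset.sum_cons]

lemma length_lamE (hr : 0 < r) : (lamE E hr).length = ∑ i : Fin n, cntE E hr i := by
  rw [lamE, Multiset.length_sort, ME, multiset_card_sum]
  exact Finset.sum_congr rfl fun i _ => Multiset.card_replicate _ _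

lemma EofL_eq (hr : 0 < r) (hch : ChainH E) :
    EofL (wE E hr) (lamE E hr) = E := by
  ext S
  by_cases hS : ∃ i, S = prefN (wE E hr) i
  · obtain ⟨i, rfl⟩ := hS
    rw [EofL_apply, count_lamE hr i, cntE]
    by_cases hmem : prefN (wE E hr) i ∈ E.support
    · obtain ⟨hle, hdvd⟩ := m_le_and_dvd hr hch i hmem
      rw [Nat.mul_div_cancel' hdvd]
      omega
    · rw [mExp_zero_of_not hr hch i hmem]
      rw [Finsupp.notMem_support_iff] at hmem
      rw [hmem]
      simp
  · push_neg at hS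
    rw [EofL_apply_ne _ _ (fun j h => (hS j) h.symm)]
    rcases Nat.eq_zero_or_pos (E S) with h0 | hpos
    · rw [h0]
    · exfalso
      have hmem : S ∈ E.support := Finsupp.mem_support_iff.2 (by omega)
      have hc1 : 1 ≤ S.1.card := Finset.card_pos.2 S.2
      have hc2 : S.1.card ≤ n := by
        have := Finset.card_le_card (Finset.subset_univ S.1)
        simpa using this
      exact hS ⟨S.1.card - 1, by omega⟩
        (chain_card_eq hr hch hmem (by simp; omega))

lemma sum_mExp_nat (w : CPerm n r) (hn : 0 < n) :
    (∑ i : Fin n, mExp w i) = (w.color ⟨0, hn⟩ : ℕ) + r * desNum w := by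
  have h1 := sum_mExp w hn
  have h2 : ((∑ i : Fin n, mExp w i : ℕ) : ℤ) = ∑ i : Fin n, (mExp w i : ℤ) := by
    push_cast
    rfl
  rw [← h2] at h1
  exact_mod_cast h1

lemma deg_ident (hr : 0 < r) (hch : ChainH E) (hn : 0 < n) :
    (E.sum fun _ m => m)
      = ((wE E hr).color ⟨0, hn⟩ : ℕ)
        + r * (desNum (wE E hr) + (lamE E hr).length) := by
  conv_lhs => rw [← EofL_eq hr hch]
  rw [EofL, degsum_sum_single, Finset.sum_add_distrib, ← Finset.mul_sum]
  have h1 : ∑ i : Fin n, (lamE E hr).count ((i:ℕ)+1) = (lamE E hr).length := by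
    rw [length_lamE hr]
    exact Finset.sum_congr rfl fun i _ => count_lamE hr i
  rw [h1, sum_mExp_nat (wE E hr) hn]
  ring

end Bwd3
section Bwd4

variable {n r : ℕ} {E : NES n →₀ ℕ}

lemma ne_of_ssub {A B : NES n} (h : A.1 ⊂ B.1) : A ≠ B :=
  fun he => h.ne (congrArg Subtype.val he)

lemma big_cnt_contra {k : ℕ} (hr : 0 < r) (hk1 : 1 ≤ k) (hk : k ≤ n) (hch : ChainH E)
    (c2 : ¬ ∃ m : ℕ, n - k + 1 ≤ m ∧ m ≤ n ∧
        Yv (univ.filter fun j : Fin n => (j:ℕ) < m) ^ r ∣ (monomial E 1 : YRing n))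
    (c3 : ¬ ∃ S : NES n, n - k + 1 ≤ S.1.card ∧ X S ^ (r+1) ∣ (monomial E 1 : YRing n))
    (c4 : ¬ ∃ S T : NES n, S.1 ⊂ T.1 ∧ n - k + 1 ≤ S.1.card ∧
        (∀ a ∈ T.1 \ S.1, ∀ b ∈ S.1, b < a) ∧ X S ^ r * X T ∣ (monomial E 1 : YRing n))
    (c5 : ¬ ∃ S T : NES n, S.1 ⊂ T.1 ∧ n - k + 1 ≤ T.1.card ∧
        (∃ l : ℕ, T.1 = S.1 ∪ univ.filter fun j : Fin n => (j:ℕ) < l) ∧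
        X S * X T ^ r ∣ (monomial E 1 : YRing n))
    (c6 : ¬ ∃ S₁ S₂ S₃ : NES n, S₁.1 ⊂ S₂.1 ∧ S₂.1 ⊂ S₃.1 ∧ n - k + 1 ≤ S₂.1.card ∧
        (∀ a ∈ S₂.1 \ S₁.1, ∀ b ∈ S₃.1 \ S₂.1, a < b) ∧
        X S₁ * X S₂ ^ r * X S₃ ∣ (monomial E 1 : YRing n))
    {i : Fin n} (hbig : n - k + 1 ≤ (i:ℕ)+1) (hcnt : 0 < cntE E hr i) : False := by
  have hrge : 1 * r ≤ E (prefN (wE E hr) i) - mExp (wE E hr) i :=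
    (Nat.le_div_iff_mul_le hr).mp hcnt
  have hmle : mExp (wE E hr) i ≤ r := mExp_le i
  have he1 : 1 ≤ E (prefN (wE E hr) i) := by omega
  have hmem : prefN (wE E hr) i ∈ E.support := Finsupp.mem_support_iff.2 (by omega)
  have hcard : (prefN (wE E hr) i).1.card = (i:ℕ)+1 := prefN_card _ i
  have he_le : E (prefN (wE E hr) i) ≤ r := by
    by_contra hgt
    exact c3 ⟨prefN (wE E hr) i, by omega, (dvd_Xpow (r+1)).2 (by omega)⟩
  have hm0 : mExp (wE E hr) i = 0 := by omega
  have heq : E (prefN (wE E hr) i) = r := by omega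
  by_cases hin : (i:ℕ)+1 < n
  · -- colors are equal across the boundary, and no descent, so letters increase
    have hDE : DE E (i:ℕ) = E (prefN (wE E hr) i) + DE E ((i:ℕ)+1) := by
      rw [DE_split E (i:ℕ), eAt_of_mem hr hch hmem]
    have hcv : ((wE E hr).color i : ℕ) = ((wE E hr).color ⟨(i:ℕ)+1, hin⟩ : ℕ) := by
      rw [color_val hr, color_val hr, hDE, heq, Nat.add_mod_left]
    have hdes : i ∉ DesSet (wE E hr) := by
      intro hdes
      have hint := mExp_int (w := wE E hr) hin
      rw [hm0, if_pos hdes] at hint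
      omega
    have hlt : ((wE E hr).letter i : ℕ) < ((wE E hr).letter ⟨(i:ℕ)+1, hin⟩ : ℕ) := by
      by_contra hnlt
      push_neg at hnlt
      have hne : (wE E hr).letter ⟨(i:ℕ)+1, hin⟩ ≠ (wE E hr).letter i := by
        intro hh
        have := congrArg Fin.val ((wE E hr).inj hh)
        simp at this
      apply hdes
      rw [mem_DesSet_iff hin]
      right
      refine ⟨Fin.ext hcv.symm, ?_⟩
      rw [Fin.lt_def]
      have : ((wE E hr).letter ⟨(i:ℕ)+1, hin⟩ : ℕ) ≠ ((wE E hr).letter i : ℕ) :=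
        fun hh => hne (Fin.ext hh)
      omega
    -- the Na values at the two boundary letters
    have hNaP : Na E ((wE E hr).letter i)
        = (E.support.filter fun T => T.1 ⊂ (prefN (wE E hr) i).1).card := by
      rw [Na_letter hr hch]
      congr 1
      apply Finset.filter_congr
      intro T hT
      constructor
      · intro hle
        rcases hch T hT _ hmem with h | h
        · rw [Finset.ssubset_iff_subset_ne]
          refine ⟨h, fun heqT => ?_⟩
          rw [heqT] at hle
          omega
        · have := Finset.card_le_card h
          omega
      · intro hss
        have := Finset.card_lt_card hss
        omega
    have hNaP' : Na E ((wE E hr).letter ⟨(i:ℕ)+1, hin⟩)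
        = (E.support.filter fun T => T.1 ⊂ (prefN (wE E hr) i).1).card + 1 := by
      rw [Na_letter hr hch]
      have hins : (E.support.filter fun T => T.1.card ≤ (i:ℕ)+1)
          = insert (prefN (wE E hr) i)
              (E.support.filter fun T => T.1 ⊂ (prefN (wE E hr) i).1) := by
        ext T
        simp only [Finset.mem_filter, Finset.mem_insert]
        constructor
        · rintro ⟨hT, hle⟩
          by_cases hc : T.1.card = (i:ℕ)+1
          · exact Or.inl (chain_card_eq hr hch hT hc)
          · right
            refine ⟨hT, ?_⟩
            rcases hch T hT _ hmem with h | h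
            · rw [Finset.ssubset_iff_subset_ne]
              refine ⟨h, fun heqT => hc (by rw [heqT]; exact hcard)⟩
            · have := Finset.card_le_card h
              omega
        · rintro (rfl | ⟨hT, hss⟩)
          · exact ⟨hmem, le_of_eq hcard⟩
          · have := Finset.card_lt_card hss
            exact ⟨hT, by omega⟩
      rw [hins, Finset.card_insert_of_notMem]
      intro hmemP
      have h := (Finset.mem_filter.1 hmemP).2
      rw [Finset.ssubset_def] at h
      exact h.2 h.1
    -- side bounds
    have ha_side : ∀ a : Fin n, a ∈ (prefN (wE E hr) i).1 →
        (∀ T ∈ E.support, T.1 ⊂ (prefN (wE E hr) i).1 → a ∉ T.1) →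
        (a:ℕ) ≤ ((wE E hr).letter i : ℕ) := by
      intro a haS haP
      apply val_le_letter hr haS
      rw [hNaP]
      unfold Na
      congr 1
      ext T
      simp only [Finset.mem_filter]
      constructor
      · rintro ⟨hT, haT⟩
        refine ⟨hT, ?_⟩
        rcases hch T hT _ hmem with h | h
        · rw [Finset.ssubset_iff_subset_ne]
          exact ⟨h, fun heqT => haT (heqT ▸ haS)⟩
        · exact absurd (h haS) haT
      · rintro ⟨hT, hss⟩
        exact ⟨hT, haP T hT hss⟩
    have hb_side : ∀ b : Fin n, b ∉ (prefN (wE E hr) i).1 →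
        (∀ T ∈ E.support, (prefN (wE E hr) i).1 ⊂ T.1 → b ∈ T.1) →
        ((wE E hr).letter ⟨(i:ℕ)+1, hin⟩ : ℕ) ≤ (b:ℕ) := by
      intro b hbS hbQ
      apply letter_le_val hr hbS hin
      rw [hNaP']
      unfold Na
      congr 1
      have : (E.support.filter fun T => b ∉ T.1)
          = insert (prefN (wE E hr) i)
              (E.support.filter fun T => T.1 ⊂ (prefN (wE E hr) i).1) := by
        ext T
        simp only [Finset.mem_filter, Finset.mem_insert]
        constructor
        · rintro ⟨hT, hbT⟩
          rcases hch T hT _ hmem with h | h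
          · by_cases heqT : T = prefN (wE E hr) i
            · exact Or.inl heqT
            · exact Or.inr ⟨hT, Finset.ssubset_iff_subset_ne.2
                ⟨h, fun hv => heqT (Subtype.ext hv)⟩⟩
          · by_cases heqT : T = prefN (wE E hr) i
            · exact Or.inl heqT
            · exfalso
              apply hbT
              apply hbQ T hT
              rw [Finset.ssubset_iff_subset_ne]
              exact ⟨h, fun hv => heqT (Subtype.ext hv.symm)⟩
        · rintro (rfl | ⟨hT, hss⟩)
          · exact ⟨hmem, hbS⟩
          · exact ⟨hT, fun hbT => hbS (hss.subset hbT)⟩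
      rw [this, Finset.card_insert_of_notMem]
      intro hmemP
      have h := (Finset.mem_filter.1 hmemP).2
      rw [Finset.ssubset_def] at h
      exact h.2 h.1
    -- case analysis on existence of smaller / larger chain sets
    by_cases hP : (E.support.filter fun T => T.1 ⊂ (prefN (wE E hr) i).1).Nonempty
    · obtain ⟨S₁, hS₁mem, hS₁max⟩ :=
        Finset.exists_max_image _ (fun T : NES n => T.1.card) hP
      have hS₁supp := (Finset.mem_filter.1 hS₁mem).1
      have hS₁ss := (Finset.mem_filter.1 hS₁mem).2
      have hPsub : ∀ T ∈ E.support, T.1 ⊂ (prefN (wE E hr) i).1 → T.1 ⊆ S₁.1 := by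
        intro T hT hss
        rcases hch T hT S₁ hS₁supp with h | h
        · exact h
        · have hc := hS₁max T (Finset.mem_filter.2 ⟨hT, hss⟩)
          rw [Finset.eq_of_subset_of_card_le h hc]
      have haside' : ∀ a : Fin n, a ∈ (prefN (wE E hr) i).1 \ S₁.1 →
          (a:ℕ) ≤ ((wE E hr).letter i : ℕ) := by
        intro a ha
        rw [Finset.mem_sdiff] at ha
        exact ha_side a ha.1 (fun T hT hss hmemT => ha.2 (hPsub T hT hss hmemT))
      by_cases hQ : (E.support.filter fun T => (prefN (wE E hr) i).1 ⊂ T.1).Nonempty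
      · -- both: condition (6)
        obtain ⟨S₃, hS₃mem, hS₃min⟩ :=
          Finset.exists_min_image _ (fun T : NES n => T.1.card) hQ
        have hS₃supp := (Finset.mem_filter.1 hS₃mem).1
        have hS₃ss := (Finset.mem_filter.1 hS₃mem).2
        have hQsub : ∀ T ∈ E.support, (prefN (wE E hr) i).1 ⊂ T.1 → S₃.1 ⊆ T.1 := by
          intro T hT hss
          rcases hch T hT S₃ hS₃supp with h | h
          · have hc := hS₃min T (Finset.mem_filter.2 ⟨hT, hss⟩)
            rw [Finset.eq_of_subset_of_card_le h hc]
          · exact h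
        apply c6
        refine ⟨S₁, prefN (wE E hr) i, S₃, hS₁ss, hS₃ss, by omega, ?_, ?_⟩
        · intro a ha b hb
          rw [Finset.mem_sdiff] at hb
          have h1 := haside' a ha
          have h2 := hb_side b hb.2 (fun T hT hss => hQsub T hT hss (hb.1))
          rw [Fin.lt_def]
          omega
        · exact (dvd_triple (ne_of_ssub hS₁ss) (ne_of_ssub (hS₁ss.trans hS₃ss))
            (ne_of_ssub hS₃ss)).2
            ⟨Nat.one_le_iff_ne_zero.2 (Finsupp.mem_support_iff.1 hS₁supp), heq.ge,
             Nat.one_le_iff_ne_zero.2 (Finsupp.mem_support_iff.1 hS₃supp)⟩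
      · -- P only: condition (5)
        rw [Finset.not_nonempty_iff_eq_empty] at hQ
        have hQfact : ∀ b : Fin n, b ∉ (prefN (wE E hr) i).1 →
            ((wE E hr).letter ⟨(i:ℕ)+1, hin⟩ : ℕ) ≤ (b:ℕ) := by
          intro b hb
          apply hb_side b hb
          intro T hT hss
          exact absurd (Finset.mem_filter.2 ⟨hT, hss⟩) (by rw [hQ]; simp)
        have hl : (prefN (wE E hr) i).1
            = S₁.1 ∪ univ.filter (fun j : Fin n => (j:ℕ) < ((wE E hr).letter i : ℕ) + 1) := by
          ext c
          rw [Finset.mem_union, Finset.mem_filter]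
          constructor
          · intro hc
            by_cases hc1 : c ∈ S₁.1
            · exact Or.inl hc1
            · right
              refine ⟨Finset.mem_univ c, ?_⟩
              have := haside' c (Finset.mem_sdiff.2 ⟨hc, hc1⟩)
              omega
          · rintro (hc | ⟨-, hc⟩)
            · exact hS₁ss.subset hc
            · by_contra hcS
              have := hQfact c hcS
              omega
        apply c5
        refine ⟨S₁, prefN (wE E hr) i, hS₁ss, by omega, ⟨_, hl⟩, ?_⟩
        have hd := (dvd_XpXp (ne_of_ssub hS₁ss) 1 r).2
          ⟨Nat.one_le_iff_ne_zero.2 (Finsupp.mem_support_iff.1 hS₁supp), heq.ge⟩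
        rwa [pow_one] at hd
    · rw [Finset.not_nonempty_iff_eq_empty] at hP
      have hPfact : ∀ a : Fin n, a ∈ (prefN (wE E hr) i).1 →
          (a:ℕ) ≤ ((wE E hr).letter i : ℕ) := by
        intro a ha
        apply ha_side a ha
        intro T hT hss
        exact absurd (Finset.mem_filter.2 ⟨hT, hss⟩) (by rw [hP]; simp)
      by_cases hQ : (E.support.filter fun T => (prefN (wE E hr) i).1 ⊂ T.1).Nonempty
      · -- Q only: condition (4)
        obtain ⟨S₃, hS₃mem, hS₃min⟩ :=
          Finset.exists_min_image _ (fun T : NES n => T.1.card) hQ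
        have hS₃supp := (Finset.mem_filter.1 hS₃mem).1
        have hS₃ss := (Finset.mem_filter.1 hS₃mem).2
        have hQsub : ∀ T ∈ E.support, (prefN (wE E hr) i).1 ⊂ T.1 → S₃.1 ⊆ T.1 := by
          intro T hT hss
          rcases hch T hT S₃ hS₃supp with h | h
          · have hc := hS₃min T (Finset.mem_filter.2 ⟨hT, hss⟩)
            rw [Finset.eq_of_subset_of_card_le h hc]
          · exact h
        apply c4
        refine ⟨prefN (wE E hr) i, S₃, hS₃ss, by omega, ?_, ?_⟩
        · intro a ha b hb
          rw [Finset.mem_sdiff] at ha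
          have h1 := hPfact b hb
          have h2 := hb_side a ha.2 (fun T hT hss => hQsub T hT hss ha.1)
          rw [Fin.lt_def]
          omega
        · have hd := (dvd_XpXp (ne_of_ssub hS₃ss) r 1).2
            ⟨heq.ge, Nat.one_le_iff_ne_zero.2 (Finsupp.mem_support_iff.1 hS₃supp)⟩
          rwa [pow_one] at hd
      · -- neither: condition (2)
        rw [Finset.not_nonempty_iff_eq_empty] at hQ
        have hQfact : ∀ b : Fin n, b ∉ (prefN (wE E hr) i).1 →
            ((wE E hr).letter ⟨(i:ℕ)+1, hin⟩ : ℕ) ≤ (b:ℕ) := by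
          intro b hb
          apply hb_side b hb
          intro T hT hss
          exact absurd (Finset.mem_filter.2 ⟨hT, hss⟩) (by rw [hQ]; simp)
        have hli : (i:ℕ) ≤ ((wE E hr).letter i : ℕ) := by
          have hsub1 : (prefN (wE E hr) i).1
              ⊆ univ.filter (fun j : Fin n => (j:ℕ) < ((wE E hr).letter i : ℕ) + 1) := by
            intro c hc
            rw [Finset.mem_filter]
            exact ⟨Finset.mem_univ c, by have := hPfact c hc; omega⟩
          have hcf := Finset.card_le_card hsub1
          rw [hcard, card_filter_lt (by have := ((wE E hr).letter i).isLt; omega)] at hcf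
          omega
        have hSfil : (prefN (wE E hr) i).1
            = univ.filter (fun j : Fin n => (j:ℕ) < (i:ℕ)+1) := by
          symm
          apply Finset.eq_of_subset_of_card_le
          · intro c hc
            rw [Finset.mem_filter] at hc
            by_contra hcS
            have h2 := hQfact c hcS
            have h3 := hlt
            omega
          · rw [hcard, card_filter_lt (by omega)]
        apply c2
        refine ⟨(i:ℕ)+1, hbig, by omega, ?_⟩
        rw [← hSfil, Yv, dif_pos (prefN (wE E hr) i).2]
        have hX : (⟨(prefN (wE E hr) i).1, (prefN (wE E hr) i).2⟩ : NES n)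
            = prefN (wE E hr) i := rfl
        rw [hX]
        exact (dvd_Xpow r).2 (heq.ge)
  · -- last position: the whole of [n] is in the support with exponent r
    have huniv : (prefN (wE E hr) i).1 = univ := by
      apply Finset.eq_univ_of_card
      rw [hcard, Fintype.card_fin]
      omega
    apply c2
    refine ⟨n, by omega, le_rfl, ?_⟩
    have hfil : (univ.filter fun j : Fin n => (j:ℕ) < n) = univ := by
      apply Finset.filter_true_of_mem
      intro j _
      exact j.isLt
    rw [hfil, ← huniv, Yv, dif_pos (prefN (wE E hr) i).2]
    exact (dvd_Xpow r).2 (heq.ge)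

end Bwd4
section Final

theorem backward_thm {n k r : ℕ} (hr : 1 ≤ r) (hn : 1 ≤ n) (hk : k ≤ n) (E : NES n →₀ ℕ)
    (c1 : ¬ ∃ S T : NES n, ¬ S.1 ⊆ T.1 ∧ ¬ T.1 ⊆ S.1 ∧ X S * X T ∣ (monomial E 1 : YRing n))
    (c2 : ¬ ∃ m : ℕ, n - k + 1 ≤ m ∧ m ≤ n ∧
        Yv (univ.filter fun j : Fin n => (j:ℕ) < m) ^ r ∣ (monomial E 1 : YRing n))
    (c3 : ¬ ∃ S : NES n, n - k + 1 ≤ S.1.card ∧ X S ^ (r+1) ∣ (monomial E 1 : YRing n))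
    (c4 : ¬ ∃ S T : NES n, S.1 ⊂ T.1 ∧ n - k + 1 ≤ S.1.card ∧
        (∀ a ∈ T.1 \ S.1, ∀ b ∈ S.1, b < a) ∧ X S ^ r * X T ∣ (monomial E 1 : YRing n))
    (c5 : ¬ ∃ S T : NES n, S.1 ⊂ T.1 ∧ n - k + 1 ≤ T.1.card ∧
        (∃ l : ℕ, T.1 = S.1 ∪ univ.filter fun j : Fin n => (j:ℕ) < l) ∧
        X S * X T ^ r ∣ (monomial E 1 : YRing n))
    (c6 : ¬ ∃ S₁ S₂ S₃ : NES n, S₁.1 ⊂ S₂.1 ∧ S₂.1 ⊂ S₃.1 ∧ n - k + 1 ≤ S₂.1.card ∧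
        (∀ a ∈ S₂.1 \ S₁.1, ∀ b ∈ S₃.1 \ S₂.1, a < b) ∧
        X S₁ * X S₂ ^ r * X S₃ ∣ (monomial E 1 : YRing n))
    (c7 : ¬ ∃ C : Fin (k * r) → NES n, (∀ i j : Fin (k * r), i ≤ j → (C i).1 ⊆ (C j).1) ∧
        (∏ i, X (C i)) ∣ (monomial E 1 : YRing n)) :
    ∃ o : OPIdx n k r, (monomial E 1 : YRing n) = btOP o := by
  have hr0 : 0 < r := hr
  have hk1 : 1 ≤ k := by
    by_contra hc
    push_neg at hc
    have hkr0 : k * r = 0 := by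
      interval_cases k
      · simp
    apply c7
    refine ⟨fun j => absurd j.isLt (by omega), fun i => absurd i.isLt (by omega), ?_⟩
    haveI : IsEmpty (Fin (k * r)) := by rw [hkr0]; infer_instance
    rw [Finset.univ_eq_empty, Finset.prod_empty]
    exact one_dvd _
  have hch : ChainH E := by
    intro S hS T hT
    by_contra hc
    push_neg at hc
    have hST : S ≠ T := by
      intro h
      subst h
      exact hc.1 subset_rfl
    exact c1 ⟨S, T, hc.1, hc.2, (dvd_XX hST).2
      ⟨Nat.one_le_iff_ne_zero.2 (Finsupp.mem_support_iff.1 hS),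
       Nat.one_le_iff_ne_zero.2 (Finsupp.mem_support_iff.1 hT)⟩⟩
  have hdeg : (E.sum fun _ m => m) < k * r := by
    by_contra hc
    push_neg at hc
    obtain ⟨C, hmono, hle⟩ := chain_exists (k*r) E hch hc
    apply c7
    refine ⟨C, hmono, ?_⟩
    rw [prod_X_chain, mono_dvd_mono]
    exact hle
  have hlamb : ∀ p ∈ lamE E hr0, 1 ≤ p ∧ p ≤ n := by
    intro p hp
    obtain ⟨i, rfl, -⟩ := mem_lamE hp
    exact ⟨by omega, by have := i.isLt; omega⟩
  refine ⟨⟨wE E hr0, lamE E hr0, lamE_sorted hr0, fun p hp => (hlamb p hp).1, ?_, ?_⟩, ?_⟩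
  · -- parts_le
    intro p hp
    obtain ⟨i, rfl, hcnt⟩ := mem_lamE hp
    by_contra hgt
    push_neg at hgt
    exact big_cnt_contra hr0 hk1 hk hch c2 c3 c4 c5 c6 (by omega) hcnt
  · -- length
    have hdi := deg_ident hr0 hch hn
    have hc0 : ((wE E hr0).color ⟨0, hn⟩ : ℕ) < r := Fin.isLt _
    have h2 : desNum (wE E hr0) + (lamE E hr0).length < k := by
      have hmul : r * (desNum (wE E hr0) + (lamE E hr0).length) < r * k := by
        calc r * (desNum (wE E hr0) + (lamE E hr0).length)
            ≤ (E.sum fun _ m => m) := by omega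
          _ < k * r := hdeg
          _ = r * k := Nat.mul_comm k r
      exact Nat.lt_of_mul_lt_mul_left hmul
    omega
  · -- the monomial equality
    show (monomial E 1 : YRing n) = btl (wE E hr0) (lamE E hr0)
    rw [btl_eq _ _ hlamb, EofL_eq hr0 hch]

end Final
/-- A monomial `y` of `ℂ[y_S]` is of the form `b̃_{(g,λ)}` with
`(g,λ) ∈ OP_{n,k}` if and only if it is divisible by none of the seven listed monomials. -/
theorem btOP_iff_not_divisible (n k r : ℕ) (hr : 1 ≤ r) (hn : 1 ≤ n) (hk : k ≤ n)
    (y : YRing n) (hy : ∃ E : NES n →₀ ℕ, y = monomial E 1) :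
    (∃ o : OPIdx n k r, y = btOP o) ↔
      ((¬ ∃ S T : NES n, ¬ S.1 ⊆ T.1 ∧ ¬ T.1 ⊆ S.1 ∧ X S * X T ∣ y) ∧
       (¬ ∃ m : ℕ, n - k + 1 ≤ m ∧ m ≤ n ∧
          Yv (univ.filter fun j : Fin n => (j : ℕ) < m) ^ r ∣ y) ∧
       (¬ ∃ S : NES n, n - k + 1 ≤ S.1.card ∧ X S ^ (r + 1) ∣ y) ∧
       (¬ ∃ S T : NES n, S.1 ⊂ T.1 ∧ n - k + 1 ≤ S.1.card ∧
          (∀ a ∈ T.1 \ S.1, ∀ b ∈ S.1, b < a) ∧ X S ^ r * X T ∣ y) ∧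
       (¬ ∃ S T : NES n, S.1 ⊂ T.1 ∧ n - k + 1 ≤ T.1.card ∧
          (∃ l : ℕ, T.1 = S.1 ∪ univ.filter fun j : Fin n => (j : ℕ) < l) ∧
          X S * X T ^ r ∣ y) ∧
       (¬ ∃ S₁ S₂ S₃ : NES n, S₁.1 ⊂ S₂.1 ∧ S₂.1 ⊂ S₃.1 ∧ n - k + 1 ≤ S₂.1.card ∧
          (∀ a ∈ S₂.1 \ S₁.1, ∀ b ∈ S₃.1 \ S₂.1, a < b) ∧ X S₁ * X S₂ ^ r * X S₃ ∣ y) ∧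
       (¬ ∃ C : Fin (k * r) → NES n, (∀ i j : Fin (k * r), i ≤ j → (C i).1 ⊆ (C j).1) ∧
          (∏ i, X (C i)) ∣ y)) := by
  constructor
  · rintro ⟨o, ho⟩
    rw [ho]
    exact forward_thm hr hn hk o
  · rintro ⟨c1, c2, c3, c4, c5, c6, c7⟩
    obtain ⟨E, rfl⟩ := hy
    exact backward_thm hr hn hk E c1 c2 c3 c4 c5 c6 c7

end
end

section
/- For every monomial y of ℂ[y_S] there is a unique multichain monomial y′ with φ(y′) = φ(y). Moreover, extending μ to an arbitrary monomial y = y_{S_1}⋯y_{S_m} as the decreasing rearrangement of (|S_1|,…,|S_m|), if y is not itself a multichain monomial then μ(y′) ▷ μ(y), i.e. μ(y′) is strictly greater than μ(y) in dominance order. -/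
open scoped Classical
open MvPolynomial Finset

noncomputable section

namespace Aux14

variable {n : ℕ}

/-- The x-degree vector of a `y`-monomial. -/
def Dv (e : NES n →₀ ℕ) : Fin n → ℕ := fun i => ∑ S : NES n, if i ∈ S.1 then e S else 0

lemma Dv_add (e f : NES n →₀ ℕ) (i : Fin n) : Dv (e + f) i = Dv e i + Dv f i := by
  simp only [Dv, Finsupp.add_apply]
  rw [← Finset.sum_add_distrib]
  exact Finset.sum_congr rfl fun S _ => by split <;> simp

lemma Dv_single (S : NES n) (m : ℕ) (i : Fin n) :
    Dv (Finsupp.single S m) i = if i ∈ S.1 then m else 0 := by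
  simp only [Dv, Finsupp.single_apply]
  rw [Finset.sum_eq_single S]
  · simp
  · intro T _ hT
    simp [Ne.symm hT]
  · simp

lemma le_Dv {e : NES n →₀ ℕ} {S : NES n} {i : Fin n} (h : i ∈ S.1) : e S ≤ Dv e i := by
  have := Finset.single_le_sum (f := fun T : NES n => if i ∈ T.1 then e T else 0)
    (fun T _ => Nat.zero_le _) (Finset.mem_univ S)
  simpa [h, Dv] using this

lemma Dv_eq_zero_iff {e : NES n →₀ ℕ} {i : Fin n} :
    Dv e i = 0 ↔ ∀ S : NES n, i ∈ S.1 → e S = 0 := by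
  rw [Dv, Finset.sum_eq_zero_iff]
  constructor
  · intro h S hi
    have := h S (Finset.mem_univ S)
    simpa [hi] using this
  · intro h S _
    by_cases hi : i ∈ S.1 <;> simp [hi, h S]

/-- The level set `{i : t ≤ d i}`. -/
def Lv (d : Fin n → ℕ) (t : ℕ) : Finset (Fin n) := univ.filter fun i => t ≤ d i

@[simp] lemma mem_Lv {d : Fin n → ℕ} {t : ℕ} {i : Fin n} : i ∈ Lv d t ↔ t ≤ d i := by
  simp [Lv]

lemma sum_sub_lt {d : Fin n → ℕ} (h : (Lv d 1).Nonempty) :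
    (∑ i, (d i - 1)) < ∑ i, d i := by
  obtain ⟨i, hi⟩ := h
  refine Finset.sum_lt_sum (fun j _ => Nat.sub_le _ _) ⟨i, Finset.mem_univ i, ?_⟩
  have h1 : 1 ≤ d i := mem_Lv.mp hi
  omega

lemma Lv_sub_subset {d : Fin n → ℕ} : Lv (fun i => d i - 1) 1 ⊆ Lv d 1 := by
  intro i hi
  have := mem_Lv.mp hi
  exact mem_Lv.mpr (by omega)

/-- The canonical multichain exponent vector with a given x-degree vector. -/
def chainOf (d : Fin n → ℕ) : NES n →₀ ℕ :=
  if h : (Lv d 1).Nonempty then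
    Finsupp.single ⟨Lv d 1, h⟩ 1 + chainOf (fun i => d i - 1)
  else 0
termination_by ∑ i, d i
decreasing_by exact sum_sub_lt h

lemma chainOf_pos {d : Fin n → ℕ} (h : (Lv d 1).Nonempty) :
    chainOf d = Finsupp.single ⟨Lv d 1, h⟩ 1 + chainOf (fun i => d i - 1) := by
  rw [chainOf, dif_pos h]

lemma chainOf_neg {d : Fin n → ℕ} (h : ¬ (Lv d 1).Nonempty) : chainOf d = 0 := by
  rw [chainOf, dif_neg h]

lemma d_eq_zero_of_Lv {d : Fin n → ℕ} (h : ¬ (Lv d 1).Nonempty) (i : Fin n) : d i = 0 := by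
  by_contra hi
  exact h ⟨i, mem_Lv.mpr (by omega)⟩

lemma chainOf_subset_Lv (d : Fin n → ℕ) : ∀ S ∈ (chainOf d).support, S.1 ⊆ Lv d 1 := by
  have key : ∀ k (d : Fin n → ℕ), (∑ i, d i) ≤ k →
      ∀ S ∈ (chainOf d).support, S.1 ⊆ Lv d 1 := by
    intro k
    induction k with
    | zero =>
      intro d hd S hS
      have h : ¬ (Lv d 1).Nonempty := by
        rintro ⟨i, hi⟩
        have h1 := mem_Lv.mp hi
        have h2 := Finset.single_le_sum (f := d) (fun j _ => Nat.zero_le _) (Finset.mem_univ i)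
        omega
      rw [chainOf_neg h] at hS
      simp at hS
    | succ k ih =>
      intro d hd S hS
      by_cases h : (Lv d 1).Nonempty
      · rw [chainOf_pos h] at hS
        rcases Finset.mem_union.mp (Finsupp.support_add hS) with h1 | h1
        · have := Finsupp.support_single_subset h1
          simp only [Finset.mem_singleton] at this
          subst this
          exact Finset.Subset.refl _
        · have hsum : (∑ i, (d i - 1)) ≤ k := by
            have := sum_sub_lt h
            omega
          exact (ih _ hsum S h1).trans Lv_sub_subset
      · rw [chainOf_neg h] at hS
        simp at hS
  exact key (∑ i, d i) d le_rfl

lemma isChainE_chainOf (d : Fin n → ℕ) : IsChainE (chainOf d) := by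
  have key : ∀ k (d : Fin n → ℕ), (∑ i, d i) ≤ k → IsChainE (chainOf d) := by
    intro k
    induction k with
    | zero =>
      intro d hd S hS
      have h : ¬ (Lv d 1).Nonempty := by
        rintro ⟨i, hi⟩
        have h1 := mem_Lv.mp hi
        have h2 := Finset.single_le_sum (f := d) (fun j _ => Nat.zero_le _) (Finset.mem_univ i)
        omega
      rw [chainOf_neg h] at hS
      simp at hS
    | succ k ih =>
      intro d hd S hS T hT
      by_cases h : (Lv d 1).Nonempty
      · have hsum : (∑ i, (d i - 1)) ≤ k := by
          have := sum_sub_lt h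
          omega
        rw [chainOf_pos h] at hS hT
        rcases Finset.mem_union.mp (Finsupp.support_add hS) with h1 | h1 <;>
          rcases Finset.mem_union.mp (Finsupp.support_add hT) with h2 | h2
        · left
          have e1 := Finsupp.support_single_subset h1
          have e2 := Finsupp.support_single_subset h2
          simp only [Finset.mem_singleton] at e1 e2
          rw [e1, e2]
        · right
          have e1 := Finsupp.support_single_subset h1
          simp only [Finset.mem_singleton] at e1
          rw [e1]
          exact (chainOf_subset_Lv _ T h2).trans Lv_sub_subset
        · left
          have e2 := Finsupp.support_single_subset h2
          simp only [Finset.mem_singleton] at e2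
          rw [e2]
          exact (chainOf_subset_Lv _ S h1).trans Lv_sub_subset
        · exact ih _ hsum S h1 T h2
      · rw [chainOf_neg h] at hS
        simp at hS
  exact key (∑ i, d i) d le_rfl

lemma Dv_chainOf (d : Fin n → ℕ) : Dv (chainOf d) = d := by
  have key : ∀ k (d : Fin n → ℕ), (∑ i, d i) ≤ k → Dv (chainOf d) = d := by
    intro k
    induction k with
    | zero =>
      intro d hd
      have h : ¬ (Lv d 1).Nonempty := by
        rintro ⟨i, hi⟩
        have h1 := mem_Lv.mp hi
        have h2 := Finset.single_le_sum (f := d) (fun j _ => Nat.zero_le _) (Finset.mem_univ i)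
        omega
      rw [chainOf_neg h]
      funext i
      have := d_eq_zero_of_Lv h i
      simp [Dv, this]
    | succ k ih =>
      intro d hd
      by_cases h : (Lv d 1).Nonempty
      · have hsum : (∑ i, (d i - 1)) ≤ k := by
          have := sum_sub_lt h
          omega
        rw [chainOf_pos h]
        funext i
        rw [Dv_add, Dv_single, ih _ hsum]
        by_cases hi : i ∈ Lv d 1
        · have := mem_Lv.mp hi
          simp only [hi, if_true]
          omega
        · have : ¬ (1 ≤ d i) := fun hc => hi (mem_Lv.mpr hc)
          simp only [hi, if_false]
          omega
      · rw [chainOf_neg h]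
        funext i
        have := d_eq_zero_of_Lv h i
        simp [Dv, this]
  exact key (∑ i, d i) d le_rfl

/-- Total degree of a `y`-exponent vector. -/
def deg (e : NES n →₀ ℕ) : ℕ := ∑ S : NES n, e S

lemma apply_le_deg (e : NES n →₀ ℕ) (S : NES n) : e S ≤ deg e :=
  Finset.single_le_sum (f := fun T : NES n => e T) (fun _ _ => Nat.zero_le _) (Finset.mem_univ S)

lemma exists_decomp {e : NES n →₀ ℕ} (he : e ≠ 0) :
    ∃ (U : NES n) (e₂ : NES n →₀ ℕ),
      U ∈ e.support ∧ (∀ T ∈ e.support, T.1.card ≤ U.1.card) ∧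
      e = Finsupp.single U 1 + e₂ ∧ e₂.support ⊆ e.support ∧ deg e₂ < deg e := by
  obtain ⟨U, hU, hmax⟩ := Finset.exists_max_image e.support (fun S => S.1.card)
      (Finsupp.support_nonempty_iff.mpr he)
  have hU1 : 1 ≤ e U := Nat.one_le_iff_ne_zero.mpr (Finsupp.mem_support_iff.mp hU)
  have hdec : e = Finsupp.single U 1 + (e - Finsupp.single U 1) := by
    ext S
    simp only [Finsupp.add_apply, Finsupp.tsub_apply, Finsupp.single_apply]
    by_cases hS : U = S
    · subst hS
      simp
      omega
    · simp [hS]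
  have hsupp : (e - Finsupp.single U 1).support ⊆ e.support := by
    intro S hS
    rw [Finsupp.mem_support_iff] at hS ⊢
    intro h0
    apply hS
    simp [Finsupp.tsub_apply, h0]
  refine ⟨U, e - Finsupp.single U 1, hU, hmax, hdec, hsupp, ?_⟩
  have : deg e = deg (Finsupp.single U 1) + deg (e - Finsupp.single U 1) := by
    conv_lhs => rw [hdec]
    simp only [deg, Finsupp.add_apply]
    exact Finset.sum_add_distrib
  have hd1 : deg (Finsupp.single U 1) = 1 := by
    simp only [deg, Finsupp.single_apply]
    rw [Finset.sum_eq_single U] <;> simp +contextual [Ne.symm]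
  omega

lemma Lv_eq_of_max {e : NES n →₀ ℕ} {U : NES n} (hU : U ∈ e.support)
    (hmax : ∀ T ∈ e.support, T.1 ⊆ U.1) : Lv (Dv e) 1 = U.1 := by
  ext i
  simp only [mem_Lv]
  constructor
  · intro h1
    have h0 : Dv e i ≠ 0 := by omega
    rw [Ne, Dv_eq_zero_iff] at h0
    push_neg at h0
    obtain ⟨S, hiS, hS⟩ := h0
    exact hmax S (Finsupp.mem_support_iff.mpr hS) hiS
  · intro hiU
    have h1 : e U ≠ 0 := Finsupp.mem_support_iff.mp hU
    have := le_Dv (e := e) hiU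
    omega

lemma Dv_decomp_sub {e e₂ : NES n →₀ ℕ} {U : NES n}
    (hdec : e = Finsupp.single U 1 + e₂)
    (hmax : ∀ T ∈ e.support, T.1 ⊆ U.1) :
    Dv e₂ = fun i => Dv e i - 1 := by
  funext i
  have hDe : Dv e i = (if i ∈ U.1 then 1 else 0) + Dv e₂ i := by
    conv_lhs => rw [hdec]
    rw [Dv_add, Dv_single]
  by_cases hi : i ∈ U.1
  · rw [if_pos hi] at hDe
    omega
  · have h0 : Dv e i = 0 := by
      rw [Dv_eq_zero_iff]
      intro S hiS
      by_contra hS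
      exact hi (hmax S (Finsupp.mem_support_iff.mpr hS) hiS)
    rw [if_neg hi] at hDe
    omega

lemma chain_eq_chainOf {e : NES n →₀ ℕ} (hc : IsChainE e) : e = chainOf (Dv e) := by
  have key : ∀ k (e : NES n →₀ ℕ), deg e ≤ k → IsChainE e → e = chainOf (Dv e) := by
    intro k
    induction k with
    | zero =>
      intro e hdeg _
      have he : e = 0 := by
        ext S
        have := apply_le_deg e S
        simp only [Finsupp.coe_zero, Pi.zero_apply]
        omega
      subst he
      rw [chainOf_neg]
      rintro ⟨i, hi⟩
      have := mem_Lv.mp hi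
      simp [Dv] at this
    | succ k ih =>
      intro e hdeg hc
      by_cases he : e = 0
      · subst he
        rw [chainOf_neg]
        rintro ⟨i, hi⟩
        have := mem_Lv.mp hi
        simp [Dv] at this
      · obtain ⟨U, e₂, hU, hmaxcard, hdec, hsupp, hdlt⟩ := exists_decomp he
        have hmax : ∀ T ∈ e.support, T.1 ⊆ U.1 := by
          intro T hT
          rcases hc T hT U hU with h | h
          · exact h
          · have := Finset.eq_of_subset_of_card_le h (hmaxcard T hT)
            rw [← this]
        have hchain2 : IsChainE e₂ := fun S hS T hT => hc S (hsupp hS) T (hsupp hT)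
        have hLv := Lv_eq_of_max hU hmax
        have hd2 := Dv_decomp_sub hdec hmax
        have hne : (Lv (Dv e) 1).Nonempty := by
          rw [hLv]; exact U.2
        rw [chainOf_pos hne]
        have hSub : (⟨Lv (Dv e) 1, hne⟩ : NES n) = U := Subtype.ext hLv
        have hdeg2 : deg e₂ ≤ k := by omega
        rw [hSub, ← hd2, ← ih e₂ hdeg2 hchain2]
        exact hdec
  exact key (deg e) e le_rfl hc

lemma muE_add (e f : NES n →₀ ℕ) : muE (e + f) = muE e + muE f := by
  unfold muE
  exact Finsupp.sum_add_index' (fun S => Multiset.replicate_zero _)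
    (fun S m m' => Multiset.replicate_add m m' _)

lemma muE_single (S : NES n) (m : ℕ) :
    muE (Finsupp.single S m) = Multiset.replicate m S.1.card := by
  unfold muE
  exact Finsupp.sum_single_index (Multiset.replicate_zero _)

lemma muE_zero : muE (0 : NES n →₀ ℕ) = 0 := by
  unfold muE
  exact Finsupp.sum_zero_index

lemma card_mem_muE {e : NES n →₀ ℕ} {S : NES n} (h : S ∈ e.support) : S.1.card ∈ muE e := by
  unfold muE Finsupp.sum
  rw [Multiset.mem_sum]
  exact ⟨S, h, Multiset.mem_replicate.mpr ⟨Finsupp.mem_support_iff.mp h, rfl⟩⟩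

lemma mem_muE {e : NES n →₀ ℕ} {x : ℕ} (h : x ∈ muE e) : ∃ S ∈ e.support, x = S.1.card := by
  unfold muE Finsupp.sum at h
  rw [Multiset.mem_sum] at h
  obtain ⟨S, hS, hx⟩ := h
  exact ⟨S, hS, Multiset.eq_of_mem_replicate hx⟩

lemma psum_zero_right (a : Multiset ℕ) : _root_.psum a 0 = 0 := by simp [_root_.psum]

lemma psum_zero_left (j : ℕ) : _root_.psum (0 : Multiset ℕ) j = 0 := by
  simp [_root_.psum, Multiset.sort_zero]

lemma sort_cons_top (a : Multiset ℕ) (m : ℕ) (h : ∀ x ∈ a, x ≤ m) :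
    (m ::ₘ a).sort (· ≤ ·) = a.sort (· ≤ ·) ++ [m] := by
  refine (fun hp h2 => List.Perm.eq_of_pairwise' (Multiset.pairwise_sort _ _) h2 hp) ?_ ?_
  · apply Multiset.coe_eq_coe.mp
    rw [Multiset.sort_eq, ← Multiset.coe_add, Multiset.sort_eq, Multiset.coe_singleton,
      add_comm, Multiset.singleton_add]
  · rw [List.pairwise_append]
    refine ⟨Multiset.pairwise_sort _ _, List.pairwise_singleton _ _, ?_⟩
    intro x hx y hy
    rw [List.mem_singleton] at hy
    subst hy
    exact h x (Multiset.mem_sort _ |>.mp hx)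

lemma psum_cons_top (a : Multiset ℕ) (m j : ℕ) (h : ∀ x ∈ a, x ≤ m) :
    _root_.psum (m ::ₘ a) (j + 1) = m + _root_.psum a j := by
  unfold _root_.psum
  rw [sort_cons_top a m h, List.reverse_append]
  simp

lemma card_eq_sum_ite (s : Finset (Fin n)) : s.card = ∑ i, if i ∈ s then 1 else 0 := by
  rw [Finset.card_filter (· ∈ s) univ |>.symm, Finset.filter_univ_mem]

lemma muE_chainOf_cons {d : Fin n → ℕ} (h : (Lv d 1).Nonempty) :
    muE (chainOf d) = (Lv d 1).card ::ₘ muE (chainOf (fun i => d i - 1)) := by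
  rw [chainOf_pos h, muE_add, muE_single, Multiset.replicate_one, ← Multiset.singleton_add]

lemma muE_chainOf_ub {d : Fin n → ℕ} {x : ℕ} (hx : x ∈ muE (chainOf d)) : x ≤ (Lv d 1).card := by
  obtain ⟨S, hS, rfl⟩ := mem_muE hx
  exact Finset.card_le_card (chainOf_subset_Lv d S hS)

lemma psum_chainOf (d : Fin n → ℕ) (j : ℕ) :
    _root_.psum (muE (chainOf d)) j = ∑ i, min j (d i) := by
  have key : ∀ k (d : Fin n → ℕ), (∑ i, d i) ≤ k → ∀ j,
      _root_.psum (muE (chainOf d)) j = ∑ i, min j (d i) := by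
    intro k
    induction k with
    | zero =>
      intro d hd j
      have h : ¬ (Lv d 1).Nonempty := by
        rintro ⟨i, hi⟩
        have h1 := mem_Lv.mp hi
        have h2 := Finset.single_le_sum (f := d) (fun j _ => Nat.zero_le _) (Finset.mem_univ i)
        omega
      rw [chainOf_neg h, muE_zero, psum_zero_left]
      symm
      apply Finset.sum_eq_zero
      intro i _
      have := d_eq_zero_of_Lv h i
      omega
    | succ k ih =>
      intro d hd j
      by_cases h : (Lv d 1).Nonempty
      · have hsum : (∑ i, (d i - 1)) ≤ k := by
          have := sum_sub_lt h
          omega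
        rw [muE_chainOf_cons h]
        match j with
        | 0 =>
          rw [psum_zero_right]
          symm
          apply Finset.sum_eq_zero
          intro i _
          omega
        | j + 1 =>
          rw [psum_cons_top _ _ _ (fun x hx => (muE_chainOf_ub hx).trans
            (Finset.card_le_card Lv_sub_subset)), ih _ hsum j]
          rw [card_eq_sum_ite, ← Finset.sum_add_distrib]
          apply Finset.sum_congr rfl
          intro i _
          by_cases hi : i ∈ Lv d 1
          · have := mem_Lv.mp hi
            rw [if_pos hi]
            omega
          · have : ¬ (1 ≤ d i) := fun hc => hi (mem_Lv.mpr hc)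
            rw [if_neg hi]
            omega
      · rw [chainOf_neg h, muE_zero, psum_zero_left]
        symm
        apply Finset.sum_eq_zero
        intro i _
        have := d_eq_zero_of_Lv h i
        omega
  exact key (∑ i, d i) d le_rfl j

lemma psum_le_sum_min (e : NES n →₀ ℕ) (j : ℕ) :
    _root_.psum (muE e) j ≤ ∑ i, min j (Dv e i) := by
  have key : ∀ k (e : NES n →₀ ℕ), deg e ≤ k → ∀ j,
      _root_.psum (muE e) j ≤ ∑ i, min j (Dv e i) := by
    intro k
    induction k with
    | zero =>
      intro e hdeg j
      have he : e = 0 := by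
        ext S
        have := apply_le_deg e S
        simp only [Finsupp.coe_zero, Pi.zero_apply]
        omega
      subst he
      rw [muE_zero, psum_zero_left]
      exact Nat.zero_le _
    | succ k ih =>
      intro e hdeg j
      by_cases he : e = 0
      · subst he
        rw [muE_zero, psum_zero_left]
        exact Nat.zero_le _
      · obtain ⟨U, e₂, hU, hmaxcard, hdec, hsupp, hdlt⟩ := exists_decomp he
        have hmuE : muE e = U.1.card ::ₘ muE e₂ := by
          conv_lhs => rw [hdec]
          rw [muE_add, muE_single, Multiset.replicate_one, ← Multiset.singleton_add]
        rw [hmuE]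
        match j with
        | 0 =>
          rw [psum_zero_right]
          exact Nat.zero_le _
        | j + 1 =>
          have hub : ∀ x ∈ muE e₂, x ≤ U.1.card := by
            intro x hx
            obtain ⟨S, hS, rfl⟩ := mem_muE hx
            exact hmaxcard S (hsupp hS)
          rw [psum_cons_top _ _ _ hub]
          have hdeg2 : deg e₂ ≤ k := by omega
          have h2 := ih e₂ hdeg2 j
          have hDe : ∀ i, Dv e i = (if i ∈ U.1 then 1 else 0) + Dv e₂ i := by
            intro i
            conv_lhs => rw [hdec]
            rw [Dv_add, Dv_single]
          calc U.1.card + _root_.psum (muE e₂) j ≤ U.1.card + ∑ i, min j (Dv e₂ i) := by omega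
            _ = ∑ i, ((if i ∈ U.1 then 1 else 0) + min j (Dv e₂ i)) := by
                rw [card_eq_sum_ite U.1, ← Finset.sum_add_distrib]
            _ ≤ ∑ i, min (j + 1) (Dv e i) := by
                apply Finset.sum_le_sum
                intro i _
                rw [hDe i]
                by_cases hi : i ∈ U.1 <;> simp only [hi, if_true, if_false] <;> omega
  exact key (deg e) e le_rfl j

lemma sum_ite_mem (s : Finset (Fin n)) (m : ℕ) :
    (∑ i, if i ∈ s then m else 0) = m * s.card := by
  rw [← Finset.sum_filter, Finset.filter_univ_mem, Finset.sum_const, smul_eq_mul, mul_comm]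

lemma muE_sum_eq (e : NES n →₀ ℕ) : (muE e).sum = ∑ i, Dv e i := by
  induction e using Finsupp.induction with
  | zero => simp [muE_zero, Dv]
  | single_add S m f _ _ ih =>
    rw [muE_add, Multiset.sum_add, muE_single, Multiset.sum_replicate, ih]
    have : ∀ i, Dv (Finsupp.single S m + f) i = (if i ∈ S.1 then m else 0) + Dv f i := by
      intro i
      rw [Dv_add, Dv_single]
    rw [Finset.sum_congr rfl fun i _ => this i, Finset.sum_add_distrib, sum_ite_mem]
    simp [mul_comm]

lemma chain_of_muE_eq {e : NES n →₀ ℕ} (h : muE e = muE (chainOf (Dv e))) : IsChainE e := by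
  have key : ∀ k (e : NES n →₀ ℕ), deg e ≤ k →
      muE e = muE (chainOf (Dv e)) → IsChainE e := by
    intro k
    induction k with
    | zero =>
      intro e hdeg _ S hS
      have he : e S = 0 := by
        have := apply_le_deg e S
        omega
      exact absurd he (Finsupp.mem_support_iff.mp hS)
    | succ k ih =>
      intro e hdeg h
      by_cases he : e = 0
      · subst he
        intro S hS
        simp at hS
      · obtain ⟨U, e₂, hU, hmaxcard, hdec, hsupp, hdlt⟩ := exists_decomp he
        have hne : (Lv (Dv e) 1).Nonempty := by
          obtain ⟨i, hi⟩ := U.2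
          refine ⟨i, mem_Lv.mpr ?_⟩
          have h1 : e U ≠ 0 := Finsupp.mem_support_iff.mp hU
          have := le_Dv (e := e) hi
          omega
        have hmuE : muE e = U.1.card ::ₘ muE e₂ := by
          conv_lhs => rw [hdec]
          rw [muE_add, muE_single, Multiset.replicate_one, ← Multiset.singleton_add]
        have hcons := muE_chainOf_cons hne
        -- |U| ≤ |Lv|
        have hUmem : U.1.card ∈ muE (chainOf (Dv e)) := by
          rw [← h]
          exact card_mem_muE hU
        have le1 : U.1.card ≤ (Lv (Dv e) 1).card := muE_chainOf_ub hUmem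
        -- |Lv| ≤ |U|
        have hLmem : (Lv (Dv e) 1).card ∈ muE e := by
          rw [h, hcons]
          exact Multiset.mem_cons_self _ _
        have le2 : (Lv (Dv e) 1).card ≤ U.1.card := by
          obtain ⟨S, hS, hx⟩ := mem_muE hLmem
          rw [hx]
          exact hmaxcard S hS
        have hsubU : U.1 ⊆ Lv (Dv e) 1 := by
          intro i hi
          have h1 : e U ≠ 0 := Finsupp.mem_support_iff.mp hU
          have := le_Dv (e := e) hi
          exact mem_Lv.mpr (by omega)
        have hLv : Lv (Dv e) 1 = U.1 := (Finset.eq_of_subset_of_card_le hsubU le2).symm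
        have hmax : ∀ T ∈ e.support, T.1 ⊆ U.1 := by
          intro T hT i hi
          have h1 : e T ≠ 0 := Finsupp.mem_support_iff.mp hT
          have := le_Dv (e := e) hi
          rw [← hLv]
          exact mem_Lv.mpr (by omega)
        have hd2 := Dv_decomp_sub hdec hmax
        have hmu2 : muE e₂ = muE (chainOf (Dv e₂)) := by
          have hcard : (Lv (Dv e) 1).card = U.1.card := by rw [hLv]
          rw [hmuE, hcons, hcard, ← hd2] at h
          exact (Multiset.cons_inj_right _).mp h
        have hchain2 := ih e₂ (by omega) hmu2
        intro S hS T hT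
        have hmem : ∀ W, W ∈ e.support → W = U ∨ W ∈ e₂.support := by
          intro W hW
          by_cases hWU : W = U
          · exact Or.inl hWU
          · right
            rw [Finsupp.mem_support_iff]
            have : e W = e₂ W := by
              conv_lhs => rw [hdec]
              simp [Finsupp.single_apply, Ne.symm hWU]
            rw [← this]
            exact Finsupp.mem_support_iff.mp hW
        rcases hmem S hS with rfl | hS2
        · exact Or.inr (hmax T hT)
        · rcases hmem T hT with rfl | hT2
          · exact Or.inl (hmax S hS)
          · exact hchain2 S hS2 T hT2
  exact key (deg e) e le_rfl h

lemma phi_monomial (e : NES n →₀ ℕ) :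
    phi n (monomial e 1) = monomial (Finsupp.equivFunOnFinite.symm (Dv e)) 1 := by
  rw [phi, aeval_monomial, map_one, one_mul, monomial_eq, map_one, one_mul]
  rw [Finsupp.prod_fintype _ _ (fun S => pow_zero _),
    Finsupp.prod_fintype _ _ (fun i => pow_zero _)]
  have step1 : ∀ S : NES n,
      (∏ i ∈ S.1, X i : XRing n) ^ e S = ∏ i : Fin n, X i ^ (if i ∈ S.1 then e S else 0) := by
    intro S
    rw [← Finset.prod_pow]
    have h2 : ∀ i : Fin n, (X i : XRing n) ^ (if i ∈ S.1 then e S else 0)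
        = if i ∈ S.1 then X i ^ e S else 1 := fun i => by split <;> simp
    rw [Finset.prod_congr rfl fun i _ => h2 i, ← Finset.prod_filter, Finset.filter_univ_mem]
  rw [Finset.prod_congr rfl fun S _ => step1 S, Finset.prod_comm]
  apply Finset.prod_congr rfl
  intro i _
  rw [Finset.prod_pow_eq_pow_sum]
  rfl

lemma Dv_eq_of_phi_eq {e f : NES n →₀ ℕ}
    (h : phi n (monomial e 1) = phi n (monomial f 1)) : Dv e = Dv f := by
  rw [phi_monomial, phi_monomial] at h
  have := MvPolynomial.monomial_left_injective (one_ne_zero (α := ℂ)) h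
  exact Finsupp.equivFunOnFinite.symm.injective this

end Aux14

/-- Every monomial of `ℂ[y_S]` has a unique multichain monomial with the
same image under `φ`; moreover if the monomial is not itself a multichain monomial, the
partition strictly increases in dominance order. -/
theorem exists_unique_multichain_phi (n : ℕ) (hn : 1 ≤ n) (e : NES n →₀ ℕ) :
    (∃! y' : YRing n, (∃ e' : NES n →₀ ℕ, IsChainE e' ∧ y' = monomial e' 1) ∧
        phi n y' = phi n (monomial e 1)) ∧
    (¬ IsChainE e → ∀ e' : NES n →₀ ℕ, IsChainE e' →
        phi n (monomial e' 1) = phi n (monomial e 1) → domLT (muE e) (muE e')) := by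
  constructor
  · refine ⟨monomial (Aux14.chainOf (Aux14.Dv e)) 1,
      ⟨⟨Aux14.chainOf (Aux14.Dv e), Aux14.isChainE_chainOf _, rfl⟩, ?_⟩, ?_⟩
    · rw [Aux14.phi_monomial, Aux14.phi_monomial, Aux14.Dv_chainOf]
    · rintro y ⟨⟨e', hc', rfl⟩, hphi⟩
      have hD := Aux14.Dv_eq_of_phi_eq hphi
      have hc2 := Aux14.chain_eq_chainOf hc'
      rw [hD] at hc2
      rw [hc2]
  · intro hnc e' hc' hphi
    have hD := Aux14.Dv_eq_of_phi_eq hphi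
    have he' : e' = Aux14.chainOf (Aux14.Dv e) := by
      have hc2 := Aux14.chain_eq_chainOf hc'
      rw [hD] at hc2
      exact hc2
    subst he'
    refine ⟨⟨?_, ?_⟩, ?_⟩
    · rw [Aux14.muE_sum_eq, Aux14.muE_sum_eq, Aux14.Dv_chainOf]
    · intro j
      calc psum (muE e) j ≤ ∑ i, min j (Aux14.Dv e i) := Aux14.psum_le_sum_min e j
        _ = psum (muE (Aux14.chainOf (Aux14.Dv e))) j := (Aux14.psum_chainOf _ _).symm
    · intro hmu
      exact hnc (Aux14.chain_of_muE_eq hmu)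

end
end

section
/- Let m be a monomial of ℂ[x_n]. (1) If μ(m) is non-admissible for (𝓢_{n,k}, S_{n,k}) (resp. (𝓡_{n,k}, R_{n,k})), then m ∈ J_{n,k} (resp. m ∈ I_{n,k}), i.e. m = 0 in S_{n,k} (resp. R_{n,k}). (2) If μ(m) is semi-admissible, then m is congruent modulo J_{n,k} (resp. modulo I_{n,k}) to a ℂ-linear combination of monomials m_α with μ(m_α) ▷ μ(m). -/
open scoped Classical
open MvPolynomial Finset

noncomputable section

/-- A partition `μ` (with parts at most `n`) is non-admissible for threshold `N`
(`N = kr` for the `S`-case, `N = kr+1` for the `R`-case) if it has at least `N` parts or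
at least `r` parts equal to `n`. -/
def NonAdm (n r N : ℕ) (μ : Multiset ℕ) : Prop :=
  N ≤ Multiset.card μ ∨ r ≤ μ.count n

/-- A partition `μ` is semi-admissible for threshold `N` if it has fewer than `N` parts and
at most `r - 1` parts equal to `n`, but some value `n-k+1 ≤ i ≤ n-1` occurs at least
`r + 1` times. -/
def SemiAdm (n k r N : ℕ) (μ : Multiset ℕ) : Prop :=
  Multiset.card μ < N ∧ μ.count n ≤ r - 1 ∧
    ∃ i : ℕ, n - k + 1 ≤ i ∧ i ≤ n - 1 ∧ r + 1 ≤ μ.count i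
/-! ### Auxiliary development -/

section Aux

variable {n : ℕ}

/-- Evaluation of a finite sum of singles. -/
lemma sum_single_apply (s : Finset (Fin n)) (m : ℕ) (i : Fin n) :
    (∑ j ∈ s, Finsupp.single j m) i = if i ∈ s then m else 0 := by
  rw [Finset.sum_apply']
  simp [Finsupp.single_apply, Finset.sum_ite_eq' s i (fun _ => m)]

/-- The exponent vector on the `x` variables induced by an exponent vector on the
`y` variables. -/
def fOf (e : NES n →₀ ℕ) : Fin n →₀ ℕ := e.sum fun S m => ∑ i ∈ S.1, Finsupp.single i m

lemma fOf_add (a b : NES n →₀ ℕ) : fOf (a + b) = fOf a + fOf b :=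
  Finsupp.sum_add_index' (by simp) (by
    intro S b1 b2
    simp [Finsupp.single_add, Finset.sum_add_distrib])

lemma fOf_single (S : NES n) (m : ℕ) :
    fOf (Finsupp.single S m) = ∑ i ∈ S.1, Finsupp.single i m := by
  rw [fOf, Finsupp.sum_single_index]
  simp

lemma fOf_zero : fOf (0 : NES n →₀ ℕ) = 0 := by simp [fOf]

lemma fOf_apply (e : NES n →₀ ℕ) (i : Fin n) :
    fOf e i = ∑ S : NES n, if i ∈ S.1 then e S else 0 := by
  rw [fOf, Finsupp.sum_apply, Finsupp.sum]
  have h1 : ∀ S : NES n, ((∑ j ∈ S.1, Finsupp.single j (e S)) i) = if i ∈ S.1 then e S else 0 :=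
    fun S => sum_single_apply S.1 (e S) i
  calc ∑ S ∈ e.support, ((∑ j ∈ S.1, Finsupp.single j (e S)) i)
      = ∑ S ∈ e.support, if i ∈ S.1 then e S else 0 := Finset.sum_congr rfl (fun S _ => h1 S)
    _ = ∑ S : NES n, if i ∈ S.1 then e S else 0 := by
        apply Finset.sum_subset (Finset.subset_univ _)
        intro S _ hS
        simp [Finsupp.notMem_support_iff.mp hS]

lemma prod_X_pow (s : Finset (Fin n)) (m : ℕ) :
    (∏ i ∈ s, (X i ^ m : XRing n)) = monomial (∑ i ∈ s, Finsupp.single i m) 1 := by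
  induction s using Finset.cons_induction with
  | empty => simp
  | cons a s ha ih =>
      rw [Finset.prod_cons, Finset.sum_cons, ih, X_pow_eq_monomial, monomial_mul, one_mul]

lemma phi_monomial (e : NES n →₀ ℕ) :
    phi n (monomial e 1 : YRing n) = monomial (fOf e) 1 := by
  induction e using Finsupp.induction with
  | zero => simp [fOf_zero]
  | single_add S m e hS hm ih =>
      have h0 : (monomial (Finsupp.single S m + e) (1:ℂ) : YRing n)
          = monomial (Finsupp.single S m) 1 * monomial e 1 := by
        rw [monomial_mul, one_mul]
      rw [h0, map_mul, ih, fOf_add, fOf_single]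
      have h2 : (monomial (Finsupp.single S m) (1:ℂ) : YRing n) = X S ^ m :=
        (X_pow_eq_monomial).symm
      have h3 : phi n (X S) = ∏ i ∈ S.1, X i := by simp [phi]
      rw [h2, map_pow, h3, ← Finset.prod_pow, prod_X_pow, monomial_mul, one_mul]

/-! ### `muE` lemmas -/

lemma muE_zero : muE (0 : NES n →₀ ℕ) = 0 := by simp [muE]

lemma muE_add (a b : NES n →₀ ℕ) : muE (a + b) = muE a + muE b :=
  Finsupp.sum_add_index' (by simp) (by intro S b1 b2; rw [Multiset.replicate_add])

lemma muE_single (S : NES n) (m : ℕ) :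
    muE (Finsupp.single S m) = Multiset.replicate m S.1.card := by
  rw [muE, Finsupp.sum_single_index]
  simp

lemma muE_card (e : NES n →₀ ℕ) :
    Multiset.card (muE e) = ∑ S ∈ e.support, e S := by
  rw [muE, Finsupp.sum]
  induction e.support using Finset.cons_induction with
  | empty => simp
  | cons a s ha ih => simp [Finset.sum_cons, ih]

lemma muE_count (e : NES n →₀ ℕ) (c : ℕ) :
    (muE e).count c = ∑ S ∈ e.support, if S.1.card = c then e S else 0 := by
  rw [muE, Finsupp.sum, Multiset.count_sum']
  exact Finset.sum_congr rfl fun S _ => by rw [Multiset.count_replicate]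

lemma muE_sum (e : NES n →₀ ℕ) : (muE e).sum = ∑ i, fOf e i := by
  have h1 : (muE e).sum = ∑ S ∈ e.support, e S * S.1.card := by
    rw [muE, Finsupp.sum]
    induction e.support using Finset.cons_induction with
    | empty => simp
    | cons a s ha ih =>
        rw [Finset.sum_cons, Finset.sum_cons, Multiset.sum_add, ih, Multiset.sum_replicate,
          smul_eq_mul]
  rw [h1]
  have h2 : ∀ i, fOf e i = ∑ S ∈ e.support, if i ∈ S.1 then e S else 0 := by
    intro i
    rw [fOf_apply]
    symm
    apply Finset.sum_subset (Finset.subset_univ _)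
    intro S _ hS
    simp [Finsupp.notMem_support_iff.mp hS]
  calc ∑ S ∈ e.support, e S * S.1.card
      = ∑ S ∈ e.support, ∑ i : Fin n, (if i ∈ S.1 then e S else 0) := by
        apply Finset.sum_congr rfl
        intro S _
        rw [Finset.sum_ite_mem, Finset.univ_inter, Finset.sum_const, smul_eq_mul, mul_comm]
    _ = ∑ i : Fin n, ∑ S ∈ e.support, (if i ∈ S.1 then e S else 0) := Finset.sum_comm
    _ = ∑ i, fOf e i := by
        exact Finset.sum_congr rfl fun i _ => (h2 i).symm

end Aux
section Aux2

variable {n : ℕ}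

lemma sorted_replicate_le (m v : ℕ) : List.Pairwise (· ≤ ·) (List.replicate m v) := by
  induction m with
  | zero => simp
  | succ m ih =>
      rw [List.replicate_succ]
      exact List.pairwise_cons.mpr ⟨fun b hb => le_of_eq (List.eq_of_mem_replicate hb).symm, ih⟩

lemma _root_.psum_zero_mult (j : ℕ) : _root_.psum (0 : Multiset ℕ) j = 0 := by
  simp [_root_.psum, Multiset.sort_zero]

lemma sort_add_replicate (a : Multiset ℕ) (m v : ℕ) (hv : ∀ x ∈ a, x ≤ v) :
    (a + Multiset.replicate m v).sort (· ≤ ·) = a.sort (· ≤ ·) ++ List.replicate m v := by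
  refine (fun h1 h2 h3 => List.Perm.eq_of_pairwise' (r := (· ≤ ·)) h2 h3 h1) ?_ ?_ ?_
  · apply Multiset.coe_eq_coe.mp
    rw [Multiset.sort_eq, ← Multiset.coe_add, Multiset.sort_eq, Multiset.coe_replicate]
  · exact Multiset.pairwise_sort _ _
  · rw [List.pairwise_append]
    refine ⟨Multiset.pairwise_sort _ _, sorted_replicate_le m v, ?_⟩
    intro x hx y hy
    rw [List.eq_of_mem_replicate hy]
    exact hv x (by rwa [← Multiset.mem_sort (· ≤ ·)])

lemma _root_.psum_add_replicate (a : Multiset ℕ) (m v j : ℕ) (hv : ∀ x ∈ a, x ≤ v) :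
    _root_.psum (a + Multiset.replicate m v) j = v * min j m + _root_.psum a (j - m) := by
  rw [_root_.psum, sort_add_replicate a m v hv, List.reverse_append, List.reverse_replicate,
    List.take_append, List.take_replicate, List.sum_append, List.sum_replicate,
    List.length_replicate]
  rw [_root_.psum]
  simp [smul_eq_mul, mul_comm, Nat.min_comm]

lemma erase_chain (e : NES n →₀ ℕ) (he : IsChainE e) (M : NES n) :
    IsChainE (e.erase M) := by
  intro S hS T hT
  rw [Finsupp.support_erase] at hS hT
  exact he S (Finset.erase_subset _ _ hS) T (Finset.erase_subset _ _ hT)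

lemma _root_.psum_formula_aux (N : ℕ) : ∀ (e : NES n →₀ ℕ), e.support.card ≤ N → IsChainE e →
    ∀ j, _root_.psum (muE e) j = ∑ i, min (fOf e i) j := by
  induction N with
  | zero =>
      intro e hcard _ j
      have : e.support = ∅ := Finset.card_eq_zero.mp (Nat.le_zero.mp hcard)
      have he0 : e = 0 := Finsupp.support_eq_empty.mp this
      subst he0
      rw [muE_zero, _root_.psum_zero_mult, fOf_zero]
      simp
  | succ N ih =>
      intro e hcard he j
      by_cases hsupp : e.support = ∅
      · have he0 : e = 0 := Finsupp.support_eq_empty.mp hsupp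
        subst he0
        rw [muE_zero, _root_.psum_zero_mult, fOf_zero]
        simp
      · obtain ⟨M, hM, hMmax⟩ := Finset.exists_max_image e.support (fun S => S.1.card)
          (Finset.nonempty_of_ne_empty hsupp)
        have hMtop : ∀ U ∈ e.support, U.1 ⊆ M.1 := by
          intro U hU
          rcases he U hU M hM with h | h
          · exact h
          · have := Finset.eq_of_subset_of_card_le h (hMmax U hU)
            rw [this]
        set m := e M with hm
        set e₀ := e.erase M with he₀
        have hdecomp : e₀ + Finsupp.single M m = e := Finsupp.erase_add_single M e
        have hsupp₀ : e₀.support = e.support.erase M := Finsupp.support_erase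
        have hcard₀ : e₀.support.card ≤ N := by
          rw [hsupp₀]
          have := Finset.card_erase_of_mem hM
          omega
        have hchain₀ : IsChainE e₀ := erase_chain e he M
        have hsub₀ : e₀.support ⊆ e.support := by
          rw [hsupp₀]; exact Finset.erase_subset _ _
        have hzero : ∀ i, i ∉ M.1 → fOf e₀ i = 0 := by
          intro i hi
          rw [fOf_apply]
          apply Finset.sum_eq_zero
          intro S _
          by_cases hS : e₀ S = 0
          · simp [hS]
          · have hSsup : S ∈ e₀.support := Finsupp.mem_support_iff.mpr hS
            have : i ∉ S.1 := fun h => hi (hMtop S (hsub₀ hSsup) h)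
            simp [this]
        have hfOfe : ∀ i, fOf e i = fOf e₀ i + (if i ∈ M.1 then m else 0) := by
          intro i
          conv_lhs => rw [← hdecomp]
          rw [fOf_add, Finsupp.add_apply, fOf_single, sum_single_apply]
        have hv : ∀ x ∈ muE e₀, x ≤ M.1.card := by
          intro x hx
          rw [muE, Finsupp.sum] at hx
          obtain ⟨S, hS, hxS⟩ := Multiset.mem_sum.mp hx
          rw [Multiset.eq_of_mem_replicate hxS]
          exact Finset.card_le_card (hMtop S (hsub₀ hS))
        have hmuE : muE e = muE e₀ + Multiset.replicate m M.1.card := by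
          conv_lhs => rw [← hdecomp]
          rw [muE_add, muE_single]
        rw [hmuE, _root_.psum_add_replicate _ _ _ _ hv, ih e₀ hcard₀ hchain₀ (j - m)]
        have hrhs : ∑ i, min (fOf e i) j
            = M.1.card * min j m + ∑ i, min (fOf e₀ i) (j - m) := by
          have step1 : ∑ i, min (fOf e i) j = ∑ i ∈ M.1, min (fOf e i) j := by
            symm
            apply Finset.sum_subset (Finset.subset_univ _)
            intro i _ hi
            rw [hfOfe i, hzero i hi, if_neg hi]
            simp
          have step2 : ∑ i ∈ M.1, min (fOf e i) j
              = ∑ i ∈ M.1, (min j m + min (fOf e₀ i) (j - m)) := by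
            apply Finset.sum_congr rfl
            intro i hi
            rw [hfOfe i, if_pos hi]
            omega
          have step3 : ∑ i ∈ M.1, min (fOf e₀ i) (j - m) = ∑ i, min (fOf e₀ i) (j - m) := by
            apply Finset.sum_subset (Finset.subset_univ _)
            intro i _ hi
            rw [hzero i hi]
            simp
          rw [step1, step2, Finset.sum_add_distrib, Finset.sum_const, step3, smul_eq_mul]
        omega
      
lemma _root_.psum_formula (e : NES n →₀ ℕ) (he : IsChainE e) (j : ℕ) :
    _root_.psum (muE e) j = ∑ i, min (fOf e i) j :=
  _root_.psum_formula_aux e.support.card e le_rfl he j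

end Aux2
section Aux3

variable {n : ℕ}

/-- The level set `{i : l ≤ f i}`. -/
def levelSet (f : Fin n →₀ ℕ) (l : ℕ) : Finset (Fin n) :=
  Finset.univ.filter fun i => l ≤ f i

/-- The canonical multichain exponent vector of a monomial exponent `f`. -/
def chainOf (f : Fin n →₀ ℕ) : NES n →₀ ℕ :=
  Finsupp.equivFunOnFinite.symm fun S =>
    ((Finset.Icc 1 (∑ i, f i)).filter fun l => levelSet f l = S.1).card

lemma chainOf_apply (f : Fin n →₀ ℕ) (S : NES n) :
    chainOf f S = ((Finset.Icc 1 (∑ i, f i)).filter fun l => levelSet f l = S.1).card := by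
  simp [chainOf]

lemma levelSet_anti (f : Fin n →₀ ℕ) {l l' : ℕ} (h : l ≤ l') : levelSet f l' ⊆ levelSet f l := by
  intro i hi
  simp only [levelSet, Finset.mem_filter] at hi ⊢
  exact ⟨hi.1, le_trans h hi.2⟩

lemma chainOf_chain (f : Fin n →₀ ℕ) : IsChainE (chainOf f) := by
  intro S hS T hT
  rw [Finsupp.mem_support_iff, chainOf_apply] at hS hT
  obtain ⟨lS, hlS⟩ := Finset.card_ne_zero.mp hS
  obtain ⟨lT, hlT⟩ := Finset.card_ne_zero.mp hT
  rw [Finset.mem_filter] at hlS hlT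
  rcases le_total lS lT with h | h
  · right
    rw [← hlS.2, ← hlT.2]
    exact levelSet_anti f h
  · left
    rw [← hlS.2, ← hlT.2]
    exact levelSet_anti f h

lemma fOf_chainOf (f : Fin n →₀ ℕ) : fOf (chainOf f) = f := by
  ext i
  rw [fOf_apply]
  have h1 : ∀ S : NES n, (if i ∈ S.1 then chainOf f S else 0)
      = ∑ l ∈ Finset.Icc 1 (∑ i', f i'), (if i ∈ S.1 ∧ levelSet f l = S.1 then 1 else 0) := by
    intro S
    by_cases hi : i ∈ S.1
    · rw [if_pos hi, chainOf_apply, Finset.card_filter]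
      exact Finset.sum_congr rfl fun l _ => by simp [hi]
    · rw [if_neg hi]
      symm
      exact Finset.sum_eq_zero fun l _ => by simp [hi]
  rw [Finset.sum_congr rfl fun S _ => h1 S, Finset.sum_comm]
  have h2 : ∀ l, l ∈ Finset.Icc 1 (∑ i', f i') →
      (∑ S : NES n, if i ∈ S.1 ∧ levelSet f l = S.1 then 1 else 0)
        = if i ∈ levelSet f l then 1 else 0 := by
    intro l _
    by_cases hil : i ∈ levelSet f l
    · rw [if_pos hil]
      rw [Finset.sum_eq_single (⟨levelSet f l, ⟨i, hil⟩⟩ : NES n)]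
      · simp [hil]
      · intro S _ hne
        rw [if_neg]
        rintro ⟨hiS, hlev⟩
        exact hne (Subtype.ext hlev.symm)
      · intro h
        exact absurd (Finset.mem_univ _) h
    · rw [if_neg hil]
      apply Finset.sum_eq_zero
      intro S _
      rw [if_neg]
      rintro ⟨hiS, hlev⟩
      rw [← hlev] at hiS
      exact hil hiS
  rw [Finset.sum_congr rfl h2]
  have h3 : ((Finset.Icc 1 (∑ i', f i')).filter fun l => i ∈ levelSet f l)
      = Finset.Icc 1 (f i) := by
    ext l
    have hle : f i ≤ ∑ i', f i' :=
      Finset.single_le_sum (fun i' _ => Nat.zero_le (f i')) (Finset.mem_univ i)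
    simp only [Finset.mem_filter, Finset.mem_Icc, levelSet, Finset.mem_filter, Finset.mem_univ,
      true_and]
    omega
  rw [← Finset.card_filter, h3, Nat.card_Icc]
  omega

end Aux3
section Aux4

variable {n : ℕ}

lemma min_sum_lemma (f f' : Fin n → ℕ) (r c : ℕ) (hr : 1 ≤ r) (A B : Finset (Fin n))
    (hd : Disjoint A B) (hc : A.card = B.card)
    (hA : ∀ a ∈ A, f' a = f a - r ∧ c + r + 1 ≤ f a)
    (hB : ∀ b ∈ B, f' b = f b + r ∧ f b ≤ c)
    (hO : ∀ i, i ∉ A → i ∉ B → f' i = f i)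
    (a₀ : Fin n) (ha₀ : a₀ ∈ A) (b₀ : Fin n) (hb₀ : b₀ ∈ B) :
    (∀ j, ∑ i, min (f i) j ≤ ∑ i, min (f' i) j) ∧
    (∑ i, min (f i) (f b₀ + 1) < ∑ i, min (f' i) (f b₀ + 1)) := by
  have split : ∀ h : Fin n → ℕ,
      ∑ i, h i = (∑ i ∈ A, h i + ∑ i ∈ B, h i) + ∑ i ∈ Finset.univ \ (A ∪ B), h i := by
    intro h
    rw [← Finset.sum_union hd, ← Finset.sum_union (Finset.disjoint_sdiff),
      Finset.union_sdiff_of_subset (Finset.subset_univ _)]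
  have hrest : ∀ j, ∑ i ∈ Finset.univ \ (A ∪ B), min (f' i) j
      = ∑ i ∈ Finset.univ \ (A ∪ B), min (f i) j := by
    intro j
    apply Finset.sum_congr rfl
    intro i hi
    rw [Finset.mem_sdiff, Finset.mem_union] at hi
    rw [hO i (fun h => hi.2 (Or.inl h)) (fun h => hi.2 (Or.inr h))]
  -- non-strict bound on a subset of A/B with equal cardinalities
  have core : ∀ (j : ℕ) (A' B' : Finset (Fin n)), A' ⊆ A → B' ⊆ B → A'.card = B'.card →
      ∑ a ∈ A', min (f a) j + ∑ b ∈ B', min (f b) j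
        ≤ ∑ a ∈ A', min (f' a) j + ∑ b ∈ B', min (f' b) j := by
    intro j A' B' hA' hB' hcard'
    have HA : ∑ a ∈ A', (min (f a) j + min c j) ≤ ∑ a ∈ A', (min (f' a) j + min (c + r) j) := by
      apply Finset.sum_le_sum
      intro a ha
      obtain ⟨h1, h2⟩ := hA a (hA' ha)
      rw [h1]
      omega
    have HB : ∑ b ∈ B', (min (f b) j + min (c + r) j) ≤ ∑ b ∈ B', (min (f' b) j + min c j) := by
      apply Finset.sum_le_sum
      intro b hb
      obtain ⟨h1, h2⟩ := hB b (hB' hb)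
      rw [h1]
      omega
    rw [Finset.sum_add_distrib, Finset.sum_add_distrib, Finset.sum_const, Finset.sum_const]
      at HA HB
    rw [hcard'] at HA
    simp only [smul_eq_mul] at HA HB
    set P := B'.card * min c j with hP
    set Q := B'.card * min (c + r) j with hQ
    omega
  constructor
  · intro j
    rw [split (fun i => min (f i) j), split (fun i => min (f' i) j), hrest j]
    have := core j A B (le_refl _) (le_refl _) hc
    omega
  · set j₀ := f b₀ + 1 with hj₀
    rw [split (fun i => min (f i) j₀), split (fun i => min (f' i) j₀), hrest j₀]
    have hsA : ∑ a ∈ A, min (f a) j₀ = min (f a₀) j₀ + ∑ a ∈ A.erase a₀, min (f a) j₀ :=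
      (Finset.add_sum_erase _ _ ha₀).symm
    have hsA' : ∑ a ∈ A, min (f' a) j₀ = min (f' a₀) j₀ + ∑ a ∈ A.erase a₀, min (f' a) j₀ :=
      (Finset.add_sum_erase _ _ ha₀).symm
    have hsB : ∑ b ∈ B, min (f b) j₀ = min (f b₀) j₀ + ∑ b ∈ B.erase b₀, min (f b) j₀ :=
      (Finset.add_sum_erase _ _ hb₀).symm
    have hsB' : ∑ b ∈ B, min (f' b) j₀ = min (f' b₀) j₀ + ∑ b ∈ B.erase b₀, min (f' b) j₀ :=
      (Finset.add_sum_erase _ _ hb₀).symm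
    have hcard' : (A.erase a₀).card = (B.erase b₀).card := by
      rw [Finset.card_erase_of_mem ha₀, Finset.card_erase_of_mem hb₀, hc]
    have hcore := core j₀ (A.erase a₀) (B.erase b₀) (Finset.erase_subset _ _)
      (Finset.erase_subset _ _) hcard'
    have hstrict : min (f a₀) j₀ + min (f b₀) j₀ + 1 ≤ min (f' a₀) j₀ + min (f' b₀) j₀ := by
      obtain ⟨ha1, ha2⟩ := hA a₀ ha₀
      obtain ⟨hb1, hb2⟩ := hB b₀ hb₀
      rw [ha1, hb1]
      omega
    omega

end Aux4
section Aux5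

variable {n : ℕ}

lemma monomial_mem_span_of_exponent_le (f : Fin n →₀ ℕ) (i : Fin n) (N : ℕ) (hNi : N ≤ f i)
    (E : Set (XRing n)) :
    (monomial f 1 : XRing n) ∈ Ideal.span ({p : XRing n | ∃ i : Fin n, p = X i ^ N} ∪ E) := by
  set h : Fin n →₀ ℕ := Finsupp.equivFunOnFinite.symm fun i' => f i' - (if i' = i then N else 0)
    with hh
  have hf : f = h + Finsupp.single i N := by
    ext i'
    rw [Finsupp.add_apply, Finsupp.single_apply]
    have : h i' = f i' - (if i' = i then N else 0) := by simp [hh]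
    rw [this]
    by_cases hii : i' = i
    · subst hii
      simp only [eq_self_iff_true, if_true]
      omega
    · have h2 : ¬ (i = i') := fun hc => hii hc.symm
      simp [hii, h2]
  have : (monomial f 1 : XRing n) = monomial h 1 * X i ^ N := by
    rw [X_pow_eq_monomial, monomial_mul, one_mul, ← hf]
  rw [this]
  exact Ideal.mul_mem_left _ _ (Ideal.subset_span (Or.inl ⟨i, rfl⟩))

lemma monomial_mem_span_esymm (k r : ℕ) (hk1 : 1 ≤ k) (hkn : k ≤ n) (f : Fin n →₀ ℕ)
    (hfr : ∀ i, r ≤ f i) (G : Set (XRing n)) :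
    (monomial f 1 : XRing n) ∈ Ideal.span
      (G ∪ {p : XRing n | ∃ d : ℕ, n - k + 1 ≤ d ∧ d ≤ n ∧ p = esymmR n r d}) := by
  set h : Fin n →₀ ℕ := Finsupp.equivFunOnFinite.symm fun i' => f i' - r with hh
  have hesymm : esymmR n r n = monomial (∑ i ∈ Finset.univ, Finsupp.single i r) (1 : ℂ) := by
    rw [esymmR]
    have hcard : (Finset.univ : Finset (Fin n)).card = n := by
      rw [Finset.card_univ, Fintype.card_fin]
    have : Finset.powersetCard n (Finset.univ : Finset (Fin n)) = {Finset.univ} := by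
      ext t
      rw [Finset.mem_powersetCard, Finset.mem_singleton]
      constructor
      · rintro ⟨-, hc⟩
        rw [← Finset.card_eq_iff_eq_univ, Fintype.card_fin]
        exact hc
      · rintro rfl
        exact ⟨Finset.Subset.refl _, by rw [Finset.card_univ, Fintype.card_fin]⟩
    rw [this, Finset.sum_singleton, prod_X_pow]
  have hf : f = h + ∑ i ∈ Finset.univ, Finsupp.single i r := by
    ext i'
    rw [Finsupp.add_apply, sum_single_apply]
    have : h i' = f i' - r := by simp [hh]
    rw [this, if_pos (Finset.mem_univ i')]
    have := hfr i'
    omega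
  have : (monomial f 1 : XRing n) = monomial h 1 * esymmR n r n := by
    rw [hesymm, monomial_mul, one_mul, ← hf]
  rw [this]
  refine Ideal.mul_mem_left _ _ (Ideal.subset_span (Or.inr ⟨n, by omega, le_rfl, rfl⟩))

lemma part1_main (k r N : ℕ) (hr : 1 ≤ r) (hn : 1 ≤ n) (hk : k ≤ n)
    (f : Fin n →₀ ℕ) (e : NES n →₀ ℕ) (he : IsChainE e) (hf : f = fOf e)
    (hNr : k = 0 → N ≤ r) (hNA : NonAdm n r N (muE e)) :
    (monomial f 1 : XRing n) ∈ Ideal.span ({p : XRing n | ∃ i : Fin n, p = X i ^ N}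
      ∪ {p : XRing n | ∃ d : ℕ, n - k + 1 ≤ d ∧ d ≤ n ∧ p = esymmR n r d}) := by
  have i0 : Fin n := ⟨0, hn⟩
  rcases hNA with hcard | hcount
  · -- at least N parts
    by_cases hN0 : N = 0
    · exact monomial_mem_span_of_exponent_le f ⟨0, hn⟩ N (by omega) _
    · rw [muE_card] at hcard
      have hne : e.support.Nonempty := by
        by_contra hemp
        rw [Finset.not_nonempty_iff_eq_empty] at hemp
        rw [hemp, Finset.sum_empty] at hcard
        omega
      obtain ⟨S₀, hS₀, hS₀min⟩ := Finset.exists_min_image e.support (fun S => S.1.card) hne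
      have hS₀sub : ∀ U ∈ e.support, S₀.1 ⊆ U.1 := by
        intro U hU
        rcases he S₀ hS₀ U hU with h | h
        · exact h
        · rw [Finset.eq_of_subset_of_card_le h (hS₀min U hU)]
      obtain ⟨i, hi⟩ := S₀.2
      have hfi : ∑ S ∈ e.support, e S ≤ f i := by
        rw [hf, fOf_apply]
        calc ∑ S ∈ e.support, e S = ∑ S ∈ e.support, (if i ∈ S.1 then e S else 0) :=
              Finset.sum_congr rfl fun U hU => by rw [if_pos (hS₀sub U hU hi)]
          _ ≤ ∑ S : NES n, (if i ∈ S.1 then e S else 0) :=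
              Finset.sum_le_sum_of_subset (Finset.subset_univ _)
      exact monomial_mem_span_of_exponent_le f i N (by omega) _
  · -- at least r parts equal to n
    have hSu : ((Finset.univ : Finset (Fin n)).Nonempty) := ⟨⟨0, hn⟩, Finset.mem_univ _⟩
    set Su : NES n := ⟨Finset.univ, hSu⟩ with hSudef
    have hcnt : (muE e).count n ≤ e Su := by
      rw [muE_count]
      have : ∀ S ∈ e.support, (if S.1.card = n then e S else 0)
          = if S = Su then e S else 0 := by
        intro S _
        congr 1
        simp only [eq_iff_iff]
        constructor
        · intro hcS
          apply Subtype.ext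
          rw [← Finset.card_eq_iff_eq_univ]
          rw [hcS, Fintype.card_fin]
        · intro hSSu
          rw [hSSu]
          simp [hSudef, Finset.card_univ, Fintype.card_fin]
      rw [Finset.sum_congr rfl this, Finset.sum_ite_eq' _ Su]
      split
      · exact le_rfl
      · exact Nat.zero_le _
    have hfr : ∀ i, r ≤ f i := by
      intro i
      have h1 : e Su ≤ f i := by
        rw [hf, fOf_apply]
        have := Finset.single_le_sum (f := fun S : NES n => if i ∈ S.1 then e S else 0)
          (fun S _ => Nat.zero_le _) (Finset.mem_univ Su)
        simpa [hSudef] using this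
      omega
    by_cases hk0 : k = 0
    · exact monomial_mem_span_of_exponent_le f ⟨0, hn⟩ N
        (le_trans (hNr hk0) (hfr ⟨0, hn⟩)) _
    · exact monomial_mem_span_esymm k r (by omega) hk f hfr _

end Aux5
section Aux6

variable {n : ℕ}

lemma part2_main (k r : ℕ) (hr : 1 ≤ r) (hn : 1 ≤ n) (hk : k ≤ n)
    (f : Fin n →₀ ℕ) (e : NES n →₀ ℕ) (he : IsChainE e) (hf : f = fOf e)
    (i₀ : ℕ) (hi1 : n - k + 1 ≤ i₀) (hi2 : i₀ ≤ n - 1)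
    (hcnt : r + 1 ≤ (muE e).count i₀) :
    ∃ q ∈ Submodule.span ℂ {m : XRing n | ∃ (f' : Fin n →₀ ℕ) (e' : NES n →₀ ℕ),
        IsChainE e' ∧ phi n (monomial e' 1) = (monomial f' 1 : XRing n) ∧
        domLT (muE e) (muE e') ∧ m = monomial f' 1},
      (monomial f 1 : XRing n) - q ∈
        Ideal.span {p : XRing n | ∃ d : ℕ, n - k + 1 ≤ d ∧ d ≤ n ∧ p = esymmR n r d} := by
  classical
  -- find the unique chain element of size i₀
  rw [muE_count] at hcnt
  have hex : ∃ S ∈ e.support, S.1.card = i₀ := by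
    by_contra hcon
    push_neg at hcon
    have : ∑ S ∈ e.support, (if S.1.card = i₀ then e S else 0) = 0 :=
      Finset.sum_eq_zero fun S hS => if_neg (hcon S hS)
    omega
  obtain ⟨S, hSsup, hScard⟩ := hex
  have heS : r + 1 ≤ e S := by
    have hsum : ∑ S' ∈ e.support, (if S'.1.card = i₀ then e S' else 0) = e S := by
      rw [← Finset.add_sum_erase _ _ hSsup, if_pos hScard]
      have hz : ∑ S' ∈ e.support.erase S, (if S'.1.card = i₀ then e S' else 0) = 0 := by
        apply Finset.sum_eq_zero
        intro T hT
        have hTS : T ≠ S := Finset.ne_of_mem_erase hT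
        have hTsup : T ∈ e.support := Finset.mem_of_mem_erase hT
        rw [if_neg]
        intro hTcard
        apply hTS
        apply Subtype.ext
        rcases he T hTsup S hSsup with h | h
        · exact Finset.eq_of_subset_of_card_le h (by omega)
        · exact (Finset.eq_of_subset_of_card_le h (by omega)).symm
      rw [hz, add_zero]
    omega
  -- the "outer" weight
  set c : ℕ := ∑ U : NES n, (if U.1 ⊆ S.1 then 0 else e U) with hc
  have hfa : ∀ a ∈ S.1, e S + c ≤ f a := by
    intro a ha
    rw [hf, fOf_apply]
    have hterm : ∀ U : NES n,
        (if U = S then e S else 0) + (if U.1 ⊆ S.1 then 0 else e U)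
          ≤ (if a ∈ U.1 then e U else 0) := by
      intro U
      by_cases h1 : U = S
      · subst h1
        simp [ha]
      · by_cases h2 : U.1 ⊆ S.1
        · simp [h1, h2]
        · by_cases h3 : e U = 0
          · simp [h1, h2, h3]
          · have hU : U ∈ e.support := Finsupp.mem_support_iff.mpr h3
            have haU : a ∈ U.1 := ((he U hU S hSsup).resolve_left h2) ha
            simp [h1, h2, haU]
    calc e S + c = ∑ U : NES n, ((if U = S then e S else 0) + (if U.1 ⊆ S.1 then 0 else e U)) := by
          rw [Finset.sum_add_distrib, Finset.sum_ite_eq' Finset.univ S,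
            if_pos (Finset.mem_univ S), hc]
      _ ≤ ∑ U : NES n, (if a ∈ U.1 then e U else 0) := Finset.sum_le_sum fun U _ => hterm U
  have hfb : ∀ b, b ∉ S.1 → f b ≤ c := by
    intro b hb
    rw [hf, fOf_apply]
    apply Finset.sum_le_sum
    intro U _
    by_cases h1 : b ∈ U.1
    · have h2 : ¬ U.1 ⊆ S.1 := fun h => hb (h h1)
      simp [h1, h2]
    · simp [h1]
  have hfge : ∀ a ∈ S.1, r + 1 ≤ f a := fun a ha => le_trans (by omega) (hfa a ha)
  -- the lowered exponent and the family of replacement exponents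
  set g : Fin n →₀ ℕ := Finsupp.equivFunOnFinite.symm
    (fun i => f i - (if i ∈ S.1 then r else 0)) with hg
  have hgapp : ∀ i, g i = f i - (if i ∈ S.1 then r else 0) := by
    intro i; simp [hg]
  set fT : Finset (Fin n) → (Fin n →₀ ℕ) := fun T => g + ∑ i ∈ T, Finsupp.single i r with hfT
  have hfTapp : ∀ T i, fT T i = (f i - (if i ∈ S.1 then r else 0)) + (if i ∈ T then r else 0) := by
    intro T i
    rw [hfT]
    simp only [Finsupp.add_apply, sum_single_apply, hgapp]
  have hfTS : fT S.1 = f := by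
    ext i
    rw [hfTapp]
    by_cases hi : i ∈ S.1
    · have := hfge i hi
      simp only [if_pos hi]
      omega
    · simp [hi]
  set P := Finset.powersetCard i₀ (Finset.univ : Finset (Fin n)) with hP
  have hSP : S.1 ∈ P := Finset.mem_powersetCard.mpr ⟨Finset.subset_univ _, hScard⟩
  have hkey : (monomial g 1 : XRing n) * esymmR n r i₀ = ∑ T ∈ P, monomial (fT T) 1 := by
    rw [esymmR, Finset.mul_sum]
    apply Finset.sum_congr rfl
    intro T hT
    rw [prod_X_pow, monomial_mul, one_mul]
  -- dominance for each replacement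
  have hdom : ∀ T ∈ P.erase S.1, domLT (muE e) (muE (chainOf (fT T))) := by
    intro T hT
    have hTS : T ≠ S.1 := Finset.ne_of_mem_erase hT
    have hTP : T ∈ P := Finset.mem_of_mem_erase hT
    obtain ⟨hTsub, hTcard⟩ := Finset.mem_powersetCard.mp hTP
    set A := S.1 \ T with hA
    set B := T \ S.1 with hB
    have hAne : A.Nonempty := by
      rw [Finset.nonempty_iff_ne_empty]
      intro hemp
      have hsub : S.1 ⊆ T := Finset.sdiff_eq_empty_iff_subset.mp hemp
      exact hTS (Finset.eq_of_subset_of_card_le hsub (by omega)).symm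
    have hBne : B.Nonempty := by
      rw [Finset.nonempty_iff_ne_empty]
      intro hemp
      have hsub : T ⊆ S.1 := Finset.sdiff_eq_empty_iff_subset.mp hemp
      exact hTS (Finset.eq_of_subset_of_card_le hsub (by omega))
    obtain ⟨a₀, ha₀⟩ := hAne
    obtain ⟨b₀, hb₀⟩ := hBne
    have hABcard : A.card = B.card := by
      rw [hA, hB]
      have h1 := Finset.card_sdiff_add_card_inter S.1 T
      have h2 := Finset.card_sdiff_add_card_inter T S.1
      rw [Finset.inter_comm] at h2
      omega
    have hmain := min_sum_lemma (fun i => f i) (fun i => fT T i) r c hr A B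
      (by rw [hA, hB]; exact disjoint_sdiff_sdiff) hABcard
      (by
        intro a ha
        rw [Finset.mem_sdiff] at ha
        constructor
        · show fT T a = f a - r
          rw [hfTapp, if_pos ha.1, if_neg ha.2, add_zero]
        · show c + r + 1 ≤ f a
          have := hfa a ha.1
          omega)
      (by
        intro b hb
        rw [Finset.mem_sdiff] at hb
        constructor
        · show fT T b = f b + r
          rw [hfTapp, if_neg hb.2, if_pos hb.1, Nat.sub_zero]
        · show f b ≤ c
          exact hfb b hb.2)
      (by
        intro i hiA hiB
        rw [Finset.mem_sdiff] at hiA hiB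
        push_neg at hiA hiB
        show fT T i = f i
        rw [hfTapp]
        by_cases hiS : i ∈ S.1
        · have hiT : i ∈ T := hiA hiS
          have := hfge i hiS
          rw [if_pos hiS, if_pos hiT]
          omega
        · have hiT : i ∉ T := fun h => hiS (hiB h)
          rw [if_neg hiS, if_neg hiT]
          omega)
      a₀ ha₀ b₀ hb₀
    have hpsum1 : ∀ j, psum (muE e) j = ∑ i, min (f i) j := by
      intro j
      rw [psum_formula e he j]
      exact Finset.sum_congr rfl fun i _ => by rw [← hf]
    have hpsum2 : ∀ j, psum (muE (chainOf (fT T))) j = ∑ i, min (fT T i) j := by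
      intro j
      rw [psum_formula _ (chainOf_chain _) j, fOf_chainOf]
    constructor
    · constructor
      · -- sums are equal
        rw [muE_sum, muE_sum, fOf_chainOf, ← hf]
        have hpt : ∀ i, fT T i + (if i ∈ S.1 then r else 0) = f i + (if i ∈ T then r else 0) := by
          intro i
          rw [hfTapp]
          by_cases hiS : i ∈ S.1
          · have := hfge i hiS
            by_cases hiT : i ∈ T <;> simp [hiS, hiT] <;> omega
          · by_cases hiT : i ∈ T <;> simp [hiS, hiT]
        have hsum := congrArg (fun h : Fin n → ℕ => ∑ i, h i) (funext hpt)
        simp only [Finset.sum_add_distrib] at hsum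
        rw [Finset.sum_ite_mem, Finset.sum_ite_mem, Finset.univ_inter, Finset.univ_inter,
          Finset.sum_const, Finset.sum_const, smul_eq_mul, smul_eq_mul] at hsum
        rw [hScard, hTcard] at hsum
        omega
      · intro j
        rw [hpsum1 j, hpsum2 j]
        simpa using hmain.1 j
    · intro hEq
      have hlt := hmain.2
      rw [← hpsum1 (f b₀ + 1), ← hpsum2 (f b₀ + 1), hEq] at hlt
      exact lt_irrefl _ hlt
  -- assemble
  refine ⟨(monomial f 1 : XRing n) - monomial g 1 * esymmR n r i₀, ?_, ?_⟩
  · have hq : (monomial f 1 : XRing n) - monomial g 1 * esymmR n r i₀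
        = - ∑ T ∈ P.erase S.1, monomial (fT T) 1 := by
      rw [hkey, ← Finset.add_sum_erase P _ hSP, hfTS]
      ring
    rw [hq]
    apply Submodule.neg_mem
    apply Submodule.sum_mem
    intro T hT
    exact Submodule.subset_span ⟨fT T, chainOf (fT T), chainOf_chain _,
      by rw [phi_monomial, fOf_chainOf], hdom T hT, rfl⟩
  · have : (monomial f 1 : XRing n) - ((monomial f 1 : XRing n) - monomial g 1 * esymmR n r i₀)
        = monomial g 1 * esymmR n r i₀ := by ring
    rw [this]
    exact Ideal.mul_mem_left _ _ (Ideal.subset_span ⟨i₀, hi1, by omega, rfl⟩)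

end Aux6
/-- Let `m = x^f` be a monomial of `ℂ[x_n]` with `μ(m) = μ(e)` for the
unique multichain exponent `e` with `φ(y^e) = x^f`. (1) If `μ(m)` is non-admissible then
`m` lies in `J_{n,k}` (resp. `I_{n,k}`). (2) If `μ(m)` is semi-admissible then, modulo
`J_{n,k}` (resp. `I_{n,k}`), `m` is a `ℂ`-linear combination of monomials `m_α` with
`μ(m_α) ▷ μ(m)`. -/
theorem xmonomial_nonadmissible_semiadmissible (n k r : ℕ) (hr : 1 ≤ r) (hn : 1 ≤ n)
    (hk : k ≤ n) (f : Fin n →₀ ℕ) (e : NES n →₀ ℕ) (he : IsChainE e)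
    (hfe : phi n (monomial e 1) = (monomial f 1 : XRing n)) :
    ((NonAdm n r (k * r) (muE e) → (monomial f 1 : XRing n) ∈ Jx n k r) ∧
     (NonAdm n r (k * r + 1) (muE e) → (monomial f 1 : XRing n) ∈ Ix n k r)) ∧
    ((SemiAdm n k r (k * r) (muE e) →
        ∃ q ∈ Submodule.span ℂ {m : XRing n | ∃ (f' : Fin n →₀ ℕ) (e' : NES n →₀ ℕ),
            IsChainE e' ∧ phi n (monomial e' 1) = (monomial f' 1 : XRing n) ∧
            domLT (muE e) (muE e') ∧ m = monomial f' 1},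
          (monomial f 1 : XRing n) - q ∈ Jx n k r) ∧
     (SemiAdm n k r (k * r + 1) (muE e) →
        ∃ q ∈ Submodule.span ℂ {m : XRing n | ∃ (f' : Fin n →₀ ℕ) (e' : NES n →₀ ℕ),
            IsChainE e' ∧ phi n (monomial e' 1) = (monomial f' 1 : XRing n) ∧
            domLT (muE e) (muE e') ∧ m = monomial f' 1},
          (monomial f 1 : XRing n) - q ∈ Ix n k r)) := by
  have hfOf : f = fOf e := by
    have h := phi_monomial e
    rw [hfe] at h
    exact (MvPolynomial.monomial_left_injective one_ne_zero h.symm).symm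
  refine ⟨⟨?_, ?_⟩, ?_, ?_⟩
  · intro hNA
    exact part1_main k r (k * r) hr hn hk f e he hfOf (fun h0 => by subst h0; simp) hNA
  · intro hNA
    exact part1_main k r (k * r + 1) hr hn hk f e he hfOf
      (fun h0 => by subst h0; simpa using hr) hNA
  · rintro ⟨-, -, i₀, h1, h2, h3⟩
    obtain ⟨q, hq1, hq2⟩ := part2_main k r hr hn hk f e he hfOf i₀ h1 h2 h3
    exact ⟨q, hq1, Ideal.span_mono Set.subset_union_right hq2⟩
  · rintro ⟨-, -, i₀, h1, h2, h3⟩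
    obtain ⟨q, hq1, hq2⟩ := part2_main k r hr hn hk f e he hfOf i₀ h1 h2 h3
    exact ⟨q, hq1, Ideal.span_mono Set.subset_union_right hq2⟩

end
end
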